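/- arXiv:2312.09368 — 6 statements merged into one kernel-verified Lean document; each statement's English description precedes it below -/
import Mathlib

section
/- Let σ be a continuous (atomless) probability measure on ℝ that is symmetric, i.e., invariant under the map x ↦ −x, let n ≥ 1, and let Z_1,…,Z_n be independent random variables each with distribution σ. Then the probability that ∑_{i=1}^k Z_i > 0 for every k with 1 ≤ k ≤ n equals (2n choose n)/4^n. -/
open MeasureTheory ProbabilityTheory Finset
open scoped ENNReal

namespace SymPosAux


lemma centralBinom_conv (n : ℕ) :
    ∑ k ∈ range (n + 1), Nat.centralBinom k * Nat.centralBinom (n - k) = 4 ^ n := by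
  induction n with
  | zero => simp [Nat.centralBinom]
  | succ n ih =>
    set u := Nat.centralBinom with hu
    have reflT : ∑ k ∈ range (n + 2), (n + 1 - k) * (u (n + 1 - k) * u k)
        = ∑ k ∈ range (n + 2), k * (u k * u (n + 1 - k)) := by
      rw [← Finset.sum_range_reflect (fun k => k * (u k * u (n + 1 - k))) (n + 2)]
      refine Finset.sum_congr rfl fun k hk => ?_
      rw [Finset.mem_range] at hk
      have h1 : n + 2 - 1 - k = n + 1 - k := by omega
      have h2 : n + 1 - (n + 1 - k) = k := by omega
      rw [h1, h2]
    have two_T : 2 * (∑ k ∈ range (n + 2), k * (u k * u (n + 1 - k)))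
        = (n + 1) * ∑ k ∈ range (n + 2), u k * u (n + 1 - k) := by
      rw [two_mul]
      nth_rewrite 1 [← reflT]
      rw [← Finset.sum_add_distrib, Finset.mul_sum]
      refine Finset.sum_congr rfl fun k hk => ?_
      rw [Finset.mem_range] at hk
      nth_rewrite 1 [mul_comm (u (n + 1 - k)) (u k)]
      rw [← add_mul]
      congr 1
      omega
    have Tval : ∑ k ∈ range (n + 2), k * (u k * u (n + 1 - k))
        = ∑ j ∈ range (n + 1), (2 * (2 * j + 1)) * (u j * u (n - j)) := by
      rw [Finset.sum_range_succ' (fun k => k * (u k * u (n + 1 - k)))]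
      simp only [zero_mul, add_zero]
      refine Finset.sum_congr rfl fun j hj => ?_
      rw [Finset.mem_range] at hj
      have h2 : n + 1 - (j + 1) = n - j := by omega
      rw [h2]
      have key : (j + 1) * u (j + 1) = 2 * (2 * j + 1) * u j :=
        Nat.succ_mul_centralBinom_succ j
      calc (j + 1) * (u (j + 1) * u (n - j)) = ((j+1) * u (j+1)) * u (n - j) := by ring
        _ = (2 * (2 * j + 1) * u j) * u (n - j) := by rw [key]
        _ = 2 * (2 * j + 1) * (u j * u (n - j)) := by ring
    have reflS : 2 * (∑ j ∈ range (n + 1), j * (u j * u (n - j)))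
        = n * ∑ j ∈ range (n + 1), u j * u (n - j) := by
      have refl2 : ∑ j ∈ range (n + 1), (n - j) * (u (n - j) * u j)
          = ∑ j ∈ range (n + 1), j * (u j * u (n - j)) := by
        rw [← Finset.sum_range_reflect (fun j => j * (u j * u (n - j))) (n + 1)]
        refine Finset.sum_congr rfl fun j hj => ?_
        rw [Finset.mem_range] at hj
        have h1 : n + 1 - 1 - j = n - j := by omega
        have h2 : n - (n - j) = j := by omega
        rw [h1, h2]
      rw [two_mul]
      nth_rewrite 1 [← refl2]
      rw [← Finset.sum_add_distrib, Finset.mul_sum]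
      refine Finset.sum_congr rfl fun j hj => ?_
      rw [Finset.mem_range] at hj
      nth_rewrite 1 [mul_comm (u (n - j)) (u j)]
      rw [← add_mul]
      congr 1
      omega
    have expand : ∑ j ∈ range (n + 1), (2 * (2 * j + 1)) * (u j * u (n - j))
        = 4 * (∑ j ∈ range (n + 1), j * (u j * u (n - j)))
          + 2 * ∑ j ∈ range (n + 1), u j * u (n - j) := by
      rw [Finset.mul_sum, Finset.mul_sum, ← Finset.sum_add_distrib]
      exact Finset.sum_congr rfl fun j _ => by ring
    have main : (n + 1) * ∑ k ∈ range (n + 2), u k * u (n + 1 - k)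
        = (n + 1) * 4 ^ (n + 1) := by
      rw [← two_T, Tval, expand, mul_add, ← mul_assoc 2 4, mul_comm 2 4, mul_assoc 4 2,
        reflS, ih]
      ring
    exact Nat.eq_of_mul_eq_mul_left (by omega) main

/-- The partial sum of the first `k` coordinates. -/
def PS {n : ℕ} (x : Fin n → ℝ) (k : ℕ) : ℝ :=
  ∑ i ∈ univ.filter (fun i : Fin n => (i : ℕ) < k), x i

def PosSet (n : ℕ) : Set (Fin n → ℝ) := {x | ∀ k, 1 ≤ k → k ≤ n → 0 < PS x k}
def NegSet (n : ℕ) : Set (Fin n → ℝ) := {x | ∀ k, 1 ≤ k → k ≤ n → PS x k < 0}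
def MaxAt (n k : ℕ) : Set (Fin n → ℝ) := {x | ∀ j, j ≤ n → j ≠ k → PS x j < PS x k}
def Good (n : ℕ) : Set (Fin n → ℝ) :=
  {x | ∀ j j' : ℕ, j < j' → j' ≤ n → PS x j ≠ PS x j'}

lemma measurable_PS {n k : ℕ} : Measurable fun x : Fin n → ℝ => PS x k :=
  Finset.measurable_sum _ fun i _ => measurable_pi_apply i

lemma measurableSet_PosSet (n : ℕ) : MeasurableSet (PosSet n) := by
  have : PosSet n = ⋂ (k : ℕ) (_ : 1 ≤ k) (_ : k ≤ n), {x : Fin n → ℝ | 0 < PS x k} := by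
    ext x; simp [PosSet]
  rw [this]
  exact .iInter fun k => .iInter fun _ => .iInter fun _ =>
    measurableSet_lt measurable_const measurable_PS

lemma measurableSet_NegSet (n : ℕ) : MeasurableSet (NegSet n) := by
  have : NegSet n = ⋂ (k : ℕ) (_ : 1 ≤ k) (_ : k ≤ n), {x : Fin n → ℝ | PS x k < 0} := by
    ext x; simp [NegSet]
  rw [this]
  exact .iInter fun k => .iInter fun _ => .iInter fun _ =>
    measurableSet_lt measurable_PS measurable_const

lemma measurableSet_MaxAt (n k : ℕ) : MeasurableSet (MaxAt n k) := by
  have : MaxAt n k = ⋂ (j : ℕ) (_ : j ≤ n) (_ : j ≠ k),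
      {x : Fin n → ℝ | PS x j < PS x k} := by
    ext x; simp [MaxAt]
  rw [this]
  exact .iInter fun j => .iInter fun _ => .iInter fun _ =>
    measurableSet_lt measurable_PS measurable_PS

lemma measurableSet_Good (n : ℕ) : MeasurableSet (Good n) := by
  have : Good n = ⋂ (j : ℕ) (j' : ℕ) (_ : j < j') (_ : j' ≤ n),
      {x : Fin n → ℝ | PS x j ≠ PS x j'} := by
    ext x; simp [Good]
  rw [this]
  refine .iInter fun j => .iInter fun j' => .iInter fun _ => .iInter fun _ => ?_
  exact (measurableSet_eq_fun measurable_PS measurable_PS).compl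

lemma PS_univ {n : ℕ} (x : Fin n → ℝ) : PS x n = ∑ i, x i := by
  rw [PS]
  congr 1
  rw [Finset.filter_true_of_mem fun i _ => i.isLt]

lemma PS_rev {n : ℕ} (x : Fin n → ℝ) {k : ℕ} (hk : k ≤ n) :
    PS (fun i => x i.rev) k = PS x n - PS x (n - k) := by
  have h1 : PS (fun i => x i.rev) k
      = ∑ i ∈ univ.filter (fun i : Fin n => ¬ ((i : ℕ) < n - k)), x i := by
    rw [PS]
    refine Finset.sum_nbij' (fun i => i.rev) (fun i => i.rev) ?_ ?_ ?_ ?_ ?_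
    · intro i hi
      simp only [Finset.mem_filter, Finset.mem_univ, true_and, Fin.val_rev] at hi ⊢
      omega
    · intro i hi
      simp only [Finset.mem_filter, Finset.mem_univ, true_and, Fin.val_rev] at hi ⊢
      omega
    · intro i _; exact Fin.rev_rev i
    · intro i _; exact Fin.rev_rev i
    · intro i _; rfl
  rw [h1]
  have h2 : PS x (n - k) + ∑ i ∈ univ.filter (fun i : Fin n => ¬ ((i : ℕ) < n - k)), x i
      = PS x n := by
    rw [PS, PS_univ]
    exact Finset.sum_filter_add_sum_filter_not _ _ _
  linarith

lemma PS_diff {n : ℕ} (x : Fin n → ℝ) {j j' : ℕ} (h : j ≤ j') :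
    PS x j' = PS x j + ∑ i ∈ univ.filter (fun i : Fin n => j ≤ (i : ℕ) ∧ (i : ℕ) < j'), x i := by
  have hsplit := Finset.sum_filter_add_sum_filter_not
    (univ.filter (fun i : Fin n => (i : ℕ) < j')) (fun i => (i : ℕ) < j) x
  rw [Finset.filter_filter, Finset.filter_filter] at hsplit
  have h1 : univ.filter (fun i : Fin n => (i : ℕ) < j' ∧ (i : ℕ) < j)
      = univ.filter (fun i : Fin n => (i : ℕ) < j) := by
    apply Finset.filter_congr; intro i _; omega
  have h2 : univ.filter (fun i : Fin n => (i : ℕ) < j' ∧ ¬ (i : ℕ) < j)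
      = univ.filter (fun i : Fin n => j ≤ (i : ℕ) ∧ (i : ℕ) < j') := by
    apply Finset.filter_congr; intro i _; omega
  rw [h1, h2] at hsplit
  rw [PS, PS, ← hsplit]

lemma PS_neg {n : ℕ} (x : Fin n → ℝ) (k : ℕ) : PS (fun i => -(x i)) k = -PS x k := by
  simp [PS]

lemma PosSet_zero : PosSet 0 = Set.univ := by
  ext x; simp only [PosSet, Set.mem_setOf_eq, Set.mem_univ, iff_true]
  intro k h1 h2; omega

variable (σ : Measure ℝ) [IsProbabilityMeasure σ]

noncomputable def piσ (n : ℕ) : Measure (Fin n → ℝ) := Measure.pi (fun _ : Fin n => σ)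

instance (n : ℕ) : IsProbabilityMeasure (piσ σ n) := by unfold piσ; infer_instance

lemma map_perm (n : ℕ) (e : Equiv.Perm (Fin n)) :
    Measure.map (fun x : Fin n → ℝ => fun i => x (e i)) (piσ σ n) = piσ σ n := by
  unfold piσ
  refine (Measure.pi_eq (μ := fun _ : Fin n => σ) fun s hs => ?_).symm
  rw [Measure.map_apply (measurable_pi_lambda _ fun i => measurable_pi_apply (e i))
    (MeasurableSet.univ_pi hs)]
  have hpre : (fun x : Fin n → ℝ => fun i => x (e i)) ⁻¹' (Set.pi Set.univ s) =
      Set.pi Set.univ (fun j => s (e.symm j)) := by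
    ext x
    simp only [Set.mem_preimage, Set.mem_pi, Set.mem_univ, forall_true_left, true_implies]
    constructor
    · intro h j; have := h (e.symm j); simpa using this
    · intro h i; have := h (e i); simpa using this
  rw [hpre, Measure.pi_pi]
  exact Fintype.prod_equiv e.symm _ _ fun j => rfl

lemma map_negpi (hsym : Measure.map (fun x : ℝ => -x) σ = σ) (n : ℕ) :
    Measure.map (fun x : Fin n → ℝ => fun i => -(x i)) (piσ σ n) = piσ σ n := by
  unfold piσ
  refine (Measure.pi_eq (μ := fun _ : Fin n => σ) fun s hs => ?_).symm
  rw [Measure.map_apply (by fun_prop : Measurable (fun x : Fin n → ℝ => fun i => -(x i)))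
    (MeasurableSet.univ_pi hs)]
  have hpre : (fun x : Fin n → ℝ => fun i => -(x i)) ⁻¹' (Set.pi Set.univ s) =
      Set.pi Set.univ (fun i => (fun a : ℝ => -a) ⁻¹' s i) := rfl
  rw [hpre, Measure.pi_pi]
  refine Finset.prod_congr rfl fun i _ => ?_
  conv_rhs => rw [← hsym]
  rw [Measure.map_apply measurable_neg (hs i)]

lemma measure_NegSet (hsym : Measure.map (fun x : ℝ => -x) σ = σ) (n : ℕ) :
    piσ σ n (NegSet n) = piσ σ n (PosSet n) := by
  have hpre : (fun x : Fin n → ℝ => fun i => -(x i)) ⁻¹' PosSet n = NegSet n := by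
    ext x
    simp only [Set.mem_preimage, PosSet, NegSet, Set.mem_setOf_eq]
    constructor
    · intro h k h1 h2; have := h k h1 h2; rw [PS_neg] at this; linarith
    · intro h k h1 h2; rw [PS_neg]; have := h k h1 h2; linarith
  have hPos : MeasurableSet (PosSet n) := by
    have : PosSet n = ⋂ (k : ℕ) (_ : 1 ≤ k) (_ : k ≤ n), {x : Fin n → ℝ | 0 < PS x k} := by
      ext x; simp [PosSet]
    rw [this]
    exact .iInter fun k => .iInter fun _ => .iInter fun _ =>
      measurableSet_lt measurable_const (Finset.measurable_sum _ fun i _ => measurable_pi_apply i)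
  calc piσ σ n (NegSet n) = piσ σ n ((fun x : Fin n → ℝ => fun i => -(x i)) ⁻¹' PosSet n) := by
        rw [hpre]
    _ = Measure.map (fun x : Fin n → ℝ => fun i => -(x i)) (piσ σ n) (PosSet n) := by
        rw [Measure.map_apply (by fun_prop : Measurable (fun x : Fin n → ℝ => fun i => -(x i))) hPos]
    _ = piσ σ n (PosSet n) := by rw [map_negpi σ hsym n]

lemma measure_MaxAt_last (n : ℕ) : piσ σ n (MaxAt n n) = piσ σ n (PosSet n) := by
  have hpre : (fun x : Fin n → ℝ => fun i => x (Fin.revPerm i)) ⁻¹' PosSet n = MaxAt n n := by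
    ext x
    simp only [Set.mem_preimage, PosSet, MaxAt, Set.mem_setOf_eq, Fin.revPerm_apply]
    constructor
    · intro h j hj hne
      have hk := h (n - j) (by omega) (by omega)
      rw [PS_rev x (by omega : n - j ≤ n)] at hk
      have : n - (n - j) = j := by omega
      rw [this] at hk
      linarith
    · intro h k h1 h2
      rw [PS_rev x h2]
      have := h (n - k) (by omega) (by omega)
      linarith
  calc piσ σ n (MaxAt n n)
      = piσ σ n ((fun x : Fin n → ℝ => fun i => x (Fin.revPerm i)) ⁻¹' PosSet n) := by rw [hpre]
    _ = Measure.map (fun x : Fin n → ℝ => fun i => x (Fin.revPerm i)) (piσ σ n) (PosSet n) := by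
        rw [Measure.map_apply (measurable_pi_lambda _ fun i => measurable_pi_apply _)
          (measurableSet_PosSet n)]
    _ = piσ σ n (PosSet n) := by rw [map_perm σ n Fin.revPerm]

def Te (k m : ℕ) : ((Fin k → ℝ) × (Fin m → ℝ)) ≃ᵐ (Fin (k + m) → ℝ) :=
  (MeasurableEquiv.sumPiEquivProdPi (fun _ : Fin k ⊕ Fin m => ℝ)).symm.trans
    (MeasurableEquiv.piCongrLeft (fun _ => ℝ) finSumFinEquiv)

lemma Te_measurePreserving (k m : ℕ) :
    MeasurePreserving (Te k m) ((piσ σ k).prod (piσ σ m)) (piσ σ (k + m)) := by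
  unfold piσ Te
  have h1 := measurePreserving_sumPiEquivProdPi_symm (fun _ : Fin k ⊕ Fin m => σ)
  have h2 := measurePreserving_piCongrLeft (fun _ : Fin (k + m) => σ) finSumFinEquiv
  simpa [MeasurableEquiv.coe_trans] using h2.comp h1

lemma Te_apply_left (k m : ℕ) (a : Fin k → ℝ) (b : Fin m → ℝ) (i : Fin k) :
    Te k m (a, b) (finSumFinEquiv (Sum.inl i)) = a i := by
  simp only [Te, MeasurableEquiv.trans_apply, MeasurableEquiv.coe_piCongrLeft,
    MeasurableEquiv.coe_sumPiEquivProdPi_symm]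
  exact Equiv.piCongrLeft_sumInl (fun _ => ℝ) finSumFinEquiv a b i

lemma Te_apply_right (k m : ℕ) (a : Fin k → ℝ) (b : Fin m → ℝ) (i : Fin m) :
    Te k m (a, b) (finSumFinEquiv (Sum.inr i)) = b i := by
  simp only [Te, MeasurableEquiv.trans_apply, MeasurableEquiv.coe_piCongrLeft,
    MeasurableEquiv.coe_sumPiEquivProdPi_symm]
  exact Equiv.piCongrLeft_sumInr (fun _ => ℝ) finSumFinEquiv a b i

lemma PS_Te (k m : ℕ) (a : Fin k → ℝ) (b : Fin m → ℝ) (j : ℕ) :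
    PS (Te k m (a, b)) j =
      (∑ i ∈ univ.filter (fun i : Fin k => (i : ℕ) < j), a i)
      + ∑ i ∈ univ.filter (fun i : Fin m => k + (i : ℕ) < j), b i := by
  rw [PS, Finset.sum_filter, Finset.sum_filter, Finset.sum_filter]
  rw [← Fintype.sum_equiv finSumFinEquiv
    (fun s : Fin k ⊕ Fin m =>
      if ((finSumFinEquiv s : Fin (k + m)) : ℕ) < j then Te k m (a, b) (finSumFinEquiv s) else 0)
    (fun i : Fin (k + m) => if (i : ℕ) < j then Te k m (a, b) i else 0)
    (fun s => rfl)]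
  rw [Fintype.sum_sum_type]
  congr 1
  · refine Fintype.sum_congr _ _ fun i => ?_
    rw [Te_apply_left k m a b i]
    rfl
  · refine Fintype.sum_congr _ _ fun i => ?_
    rw [Te_apply_right k m a b i]
    rfl

lemma PS_Te_le (k m : ℕ) (a : Fin k → ℝ) (b : Fin m → ℝ) {j : ℕ} (hj : j ≤ k) :
    PS (Te k m (a, b)) j = PS a j := by
  rw [PS_Te, PS]
  have : ∑ i ∈ univ.filter (fun i : Fin m => k + (i : ℕ) < j), b i = 0 := by
    refine Finset.sum_eq_zero fun i hi => ?_
    simp only [Finset.mem_filter] at hi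
    omega
  rw [this, add_zero]

lemma PS_Te_add (k m : ℕ) (a : Fin k → ℝ) (b : Fin m → ℝ) (d : ℕ) :
    PS (Te k m (a, b)) (k + d) = PS a k + PS b d := by
  rw [PS_Te, PS, PS]
  congr 2
  · apply Finset.filter_congr
    intro i _
    omega
  · apply Finset.filter_congr
    intro i _
    omega

lemma measure_MaxAt_split (k m : ℕ) :
    piσ σ (k + m) (MaxAt (k + m) k) = piσ σ k (MaxAt k k) * piσ σ m (NegSet m) := by
  have hTe := Te_measurePreserving σ k m
  have hset : Te k m ⁻¹' (MaxAt (k + m) k) = (MaxAt k k) ×ˢ (NegSet m) := by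
    ext ⟨a, b⟩
    simp only [Set.mem_preimage, Set.mem_prod, MaxAt, NegSet, Set.mem_setOf_eq]
    constructor
    · intro h
      refine ⟨fun j hj hne => ?_, fun d hd1 hdm => ?_⟩
      · have := h j (by omega) hne
        rwa [PS_Te_le k m a b hj, PS_Te_le k m a b le_rfl] at this
      · have := h (k + d) (by omega) (by omega)
        rw [PS_Te_add k m a b d, PS_Te_le k m a b le_rfl] at this
        linarith
    · rintro ⟨h1, h2⟩ j hj hne
      rcases le_or_gt j k with hjk | hjk
      · rw [PS_Te_le k m a b hjk, PS_Te_le k m a b le_rfl]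
        exact h1 j hjk hne
      · have hd : j = k + (j - k) := by omega
        rw [hd, PS_Te_add k m a b (j - k), PS_Te_le k m a b le_rfl]
        have := h2 (j - k) (by omega) (by omega)
        linarith
  calc piσ σ (k + m) (MaxAt (k + m) k)
      = ((piσ σ k).prod (piσ σ m)) (Te k m ⁻¹' (MaxAt (k + m) k)) := by
        rw [← hTe.map_eq, Measure.map_apply (Te k m).measurable (measurableSet_MaxAt (k + m) k)]
    _ = ((piσ σ k).prod (piσ σ m)) ((MaxAt k k) ×ˢ (NegSet m)) := by rw [hset]
    _ = piσ σ k (MaxAt k k) * piσ σ m (NegSet m) := by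
        rw [Measure.prod_prod]

lemma measure_sum_eq_zero (hatomless : ∀ x : ℝ, σ {x} = 0) (n : ℕ)
    (s : Finset (Fin n)) (hs : s.Nonempty) (c : ℝ) :
    piσ σ n {x | ∑ i ∈ s, x i = c} = 0 := by
  rcases n with _ | N
  · obtain ⟨i₀, _⟩ := hs
    exact i₀.elim0
  obtain ⟨i₀, hi₀⟩ := hs
  have hmp := measurePreserving_piFinSuccAbove (fun _ : Fin (N + 1) => σ) i₀
  set ν : Measure (Fin N → ℝ) := Measure.pi fun _ : Fin N => σ with hν
  set e := MeasurableEquiv.piFinSuccAbove (fun _ : Fin (N + 1) => ℝ) i₀ with he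
  classical
  set t : Finset (Fin N) := univ.filter (fun j => i₀.succAbove j ∈ s) with ht
  have himg : t.image i₀.succAbove = s.erase i₀ := by
    ext i
    simp only [Finset.mem_image, Finset.mem_erase, ht, Finset.mem_filter, Finset.mem_univ,
      true_and]
    constructor
    · rintro ⟨j, hj, rfl⟩
      exact ⟨Fin.succAbove_ne i₀ j, hj⟩
    · rintro ⟨hne, hi⟩
      obtain ⟨j, hj⟩ := Fin.exists_succAbove_eq hne
      exact ⟨j, hj.symm ▸ hi, hj⟩
  have hsum : ∀ x : Fin (N + 1) → ℝ,
      ∑ i ∈ s, x i = x i₀ + ∑ j ∈ t, x (i₀.succAbove j) := by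
    intro x
    rw [← Finset.add_sum_erase s x hi₀]
    congr 1
    rw [← himg, Finset.sum_image (fun a _ b _ h => Fin.succAbove_right_injective h)]
  set F : (Fin N → ℝ) → ℝ := fun r => ∑ j ∈ t, r j with hF
  have hFmeas : Measurable F := Finset.measurable_sum _ fun j _ => measurable_pi_apply j
  set S : Set (ℝ × (Fin N → ℝ)) := {p | p.1 = c - F p.2} with hS
  have hSmeas : MeasurableSet S :=
    measurableSet_eq_fun measurable_fst (measurable_const.sub (hFmeas.comp measurable_snd))
  have hset : {x : Fin (N + 1) → ℝ | ∑ i ∈ s, x i = c} = e ⁻¹' S := by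
    ext x
    simp only [Set.mem_setOf_eq, Set.mem_preimage, hS]
    rw [hsum x]
    have hex : e x = (x i₀, fun j => x (i₀.succAbove j)) := rfl
    rw [hex]
    constructor <;> intro h <;> simp only [hF] at * <;> linarith
  have : piσ σ (N + 1) (e ⁻¹' S) = (σ.prod ν) S := by
    rw [← hmp.map_eq, Measure.map_apply e.measurable hSmeas]
    rfl
  rw [hset, this, Measure.prod_apply_symm hSmeas]
  have hslice : ∀ y : Fin N → ℝ, (fun x : ℝ => (x, y)) ⁻¹' S = {c - F y} := by
    intro y
    ext x
    simp [hS]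
  simp only [hslice, hatomless]
  simp

lemma measure_Good_compl (hatomless : ∀ x : ℝ, σ {x} = 0) (n : ℕ) :
    piσ σ n (Good n)ᶜ = 0 := by
  have hsub : (Good n)ᶜ ⊆ ⋃ (j : ℕ) (j' : ℕ) (_ : j < j') (_ : j' ≤ n),
      {x : Fin n → ℝ | PS x j = PS x j'} := by
    intro x hx
    simp only [Good, Set.mem_compl_iff, Set.mem_setOf_eq, not_forall, not_not] at hx
    obtain ⟨j, j', h1, h2, h3⟩ := hx
    simp only [Set.mem_iUnion]
    exact ⟨j, j', h1, h2, h3⟩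
  refine measure_mono_null hsub ?_
  refine measure_iUnion_null fun j => measure_iUnion_null fun j' =>
    measure_iUnion_null fun h1 => measure_iUnion_null fun h2 => ?_
  have hset : {x : Fin n → ℝ | PS x j = PS x j'}
      = {x : Fin n → ℝ | ∑ i ∈ univ.filter (fun i : Fin n => j ≤ (i : ℕ) ∧ (i : ℕ) < j'), x i
          = 0} := by
    ext x
    simp only [Set.mem_setOf_eq]
    have := PS_diff x (le_of_lt h1)
    constructor <;> intro hh <;> linarith
  rw [hset]
  refine measure_sum_eq_zero σ hatomless n _ ⟨⟨j, by omega⟩, ?_⟩ 0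
  simp only [Finset.mem_filter, Finset.mem_univ, true_and]
  omega

lemma recursion (hatomless : ∀ x : ℝ, σ {x} = 0)
    (hsym : Measure.map (fun x : ℝ => -x) σ = σ) (n : ℕ) :
    ∑ k ∈ range (n + 1), piσ σ k (PosSet k) * piσ σ (n - k) (PosSet (n - k)) = 1 := by
  classical
  -- coverage
  have hGood : piσ σ n (Good n) = 1 := by
    rw [← prob_compl_eq_zero_iff (measurableSet_Good n)]
    exact measure_Good_compl σ hatomless n
  have hsub : Good n ⊆ ⋃ k ∈ range (n + 1), MaxAt n k := by
    intro x hx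
    obtain ⟨k, hk, hmax⟩ := Finset.exists_max_image (range (n + 1)) (fun j => PS x j)
      ⟨0, by simp⟩
    simp only [Set.mem_iUnion]
    refine ⟨k, hk, fun j hj hne => ?_⟩
    rw [Finset.mem_range] at hk
    have hle := hmax j (by rw [Finset.mem_range]; omega)
    rcases lt_or_eq_of_le hle with h | h
    · exact h
    · exfalso
      rcases Nat.lt_or_ge j k with hlt | hge
      · exact hx j k hlt (by omega) h
      · exact hx k j (by omega) hj h.symm
  have hcover : piσ σ n (⋃ k ∈ range (n + 1), MaxAt n k) = 1 := by
    refine le_antisymm prob_le_one ?_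
    calc (1 : ℝ≥0∞) = piσ σ n (Good n) := hGood.symm
      _ ≤ piσ σ n (⋃ k ∈ range (n + 1), MaxAt n k) := measure_mono hsub
  have hdisj : (↑(range (n + 1)) : Set ℕ).PairwiseDisjoint (MaxAt n ·) := by
    intro k hk k' hk' hne
    simp only [Finset.coe_range, Set.mem_Iio] at hk hk'
    refine Set.disjoint_left.2 fun x hx hx' => ?_
    have h1 := hx k' (by omega) (Ne.symm hne)
    have h2 := hx' k (by omega) hne
    exact absurd (h1.trans h2) (lt_irrefl _)
  have hsum : piσ σ n (⋃ k ∈ range (n + 1), MaxAt n k)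
      = ∑ k ∈ range (n + 1), piσ σ n (MaxAt n k) :=
    measure_biUnion_finset hdisj fun k _ => measurableSet_MaxAt n k
  rw [← hcover, hsum]
  refine Finset.sum_congr rfl fun k hk => ?_
  rw [Finset.mem_range] at hk
  have hsplit := measure_MaxAt_split σ k (n - k)
  have hadd : k + (n - k) = n := by omega
  rw [hadd] at hsplit
  rw [hsplit, measure_MaxAt_last, measure_NegSet σ hsym]

lemma pos_prob (hatomless : ∀ x : ℝ, σ {x} = 0)
    (hsym : Measure.map (fun x : ℝ => -x) σ = σ) (n : ℕ) :
    piσ σ n (PosSet n) = (Nat.centralBinom n : ℝ≥0∞) / 4 ^ n := by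
  induction n using Nat.strong_induction_on with
  | _ n ih =>
    match n, ih with
    | 0, _ => simp [PosSet_zero, Nat.centralBinom]
    | (N + 1), ih =>
      have h4pow0 : ((4 : ℝ≥0∞) ^ (N + 1)) ≠ 0 := pow_ne_zero _ (by norm_num)
      have h4powtop : ((4 : ℝ≥0∞) ^ (N + 1)) ≠ ∞ := ENNReal.pow_ne_top (by norm_num)
      have hrec := recursion σ hatomless hsym (N + 1)
      rw [Finset.sum_range_succ, Finset.sum_range_succ'] at hrec
      have hs1 : N + 1 - (N + 1) = 0 := by omega
      rw [hs1] at hrec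
      simp only [Nat.sub_zero] at hrec
      have hP0 : piσ σ 0 (PosSet 0) = 1 := by
        rw [PosSet_zero]; exact measure_univ
      rw [hP0, one_mul, mul_one] at hrec
      have hmid : ∀ i ∈ range N,
          piσ σ (i + 1) (PosSet (i + 1))
            * piσ σ (N + 1 - (i + 1)) (PosSet (N + 1 - (i + 1))) =
            ((Nat.centralBinom (i + 1) * Nat.centralBinom (N - i) : ℕ) : ℝ≥0∞)
              * ((4 : ℝ≥0∞) ^ (N + 1))⁻¹ := by
        intro i hi
        rw [Finset.mem_range] at hi
        have e2 : N + 1 - (i + 1) = N - i := by omega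
        rw [e2, ih (i + 1) (by omega), ih (N - i) (by omega), div_eq_mul_inv, div_eq_mul_inv]
        have hpow : ((4 : ℝ≥0∞) ^ (i + 1))⁻¹ * ((4 : ℝ≥0∞) ^ (N - i))⁻¹
            = ((4 : ℝ≥0∞) ^ (N + 1))⁻¹ := by
          have hexp : i + 1 + (N - i) = N + 1 := by omega
          rw [← ENNReal.mul_inv (Or.inl (pow_ne_zero _ (by norm_num)))
            (Or.inl (ENNReal.pow_ne_top (by norm_num))), ← pow_add, hexp]
        push_cast
        calc (Nat.centralBinom (i+1) : ℝ≥0∞) * (4 ^ (i+1))⁻¹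
              * ((Nat.centralBinom (N-i) : ℝ≥0∞) * (4 ^ (N-i))⁻¹)
            = ((Nat.centralBinom (i+1) : ℝ≥0∞) * (Nat.centralBinom (N-i) : ℝ≥0∞))
              * ((4 ^ (i+1))⁻¹ * (4 ^ (N-i))⁻¹) := by ring
          _ = (Nat.centralBinom (i+1) : ℝ≥0∞) * (Nat.centralBinom (N-i) : ℝ≥0∞)
              * ((4 : ℝ≥0∞) ^ (N + 1))⁻¹ := by rw [hpow]
      rw [Finset.sum_congr rfl hmid, ← Finset.sum_mul, ← Nat.cast_sum] at hrec
      set D : ℕ := ∑ i ∈ range N, Nat.centralBinom (i + 1) * Nat.centralBinom (N - i) with hD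
      have hnat : D + 2 * Nat.centralBinom (N + 1) = 4 ^ (N + 1) := by
        have h := centralBinom_conv (N + 1)
        rw [Finset.sum_range_succ, Finset.sum_range_succ'] at h
        simp only [Nat.sub_self, Nat.sub_zero, Nat.centralBinom_zero, one_mul, mul_one] at h
        have hcongr : ∀ i ∈ range N,
            Nat.centralBinom (i + 1) * Nat.centralBinom (N + 1 - (i + 1))
              = Nat.centralBinom (i + 1) * Nat.centralBinom (N - i) := by
          intro i hi; congr 2; omega
        rw [Finset.sum_congr rfl hcongr] at h
        rw [hD]
        omega
      have hfin : ((D : ℝ≥0∞) * ((4:ℝ≥0∞) ^ (N+1))⁻¹) ≠ ∞ :=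
        ENNReal.mul_ne_top (ENNReal.natCast_ne_top D) (by simp [h4pow0])
      have hgoal2 : (D : ℝ≥0∞) * ((4:ℝ≥0∞) ^ (N+1))⁻¹
          + 2 * ((Nat.centralBinom (N+1) : ℝ≥0∞) * ((4:ℝ≥0∞) ^ (N+1))⁻¹) = 1 := by
        have hc : ((4:ℝ≥0∞) ^ (N+1)) * ((4:ℝ≥0∞) ^ (N+1))⁻¹ = 1 :=
          ENNReal.mul_inv_cancel h4pow0 h4powtop
        calc (D : ℝ≥0∞) * ((4:ℝ≥0∞) ^ (N+1))⁻¹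
              + 2 * ((Nat.centralBinom (N+1) : ℝ≥0∞) * ((4:ℝ≥0∞) ^ (N+1))⁻¹)
            = ((D : ℝ≥0∞) + 2 * (Nat.centralBinom (N+1) : ℝ≥0∞)) * ((4:ℝ≥0∞) ^ (N+1))⁻¹ := by
              ring
          _ = (((D + 2 * Nat.centralBinom (N+1) : ℕ) : ℝ≥0∞)) * ((4:ℝ≥0∞) ^ (N+1))⁻¹ := by
              push_cast; ring
          _ = ((4:ℝ≥0∞) ^ (N+1)) * ((4:ℝ≥0∞) ^ (N+1))⁻¹ := by
              rw [hnat]; push_cast; ring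
          _ = 1 := hc
      have hX : (D : ℝ≥0∞) * ((4:ℝ≥0∞) ^ (N+1))⁻¹
          + 2 * piσ σ (N + 1) (PosSet (N + 1)) = 1 := by
        rw [two_mul, ← add_assoc]
        exact hrec
      have h2 : 2 * piσ σ (N + 1) (PosSet (N + 1))
          = 2 * ((Nat.centralBinom (N+1) : ℝ≥0∞) * ((4:ℝ≥0∞) ^ (N+1))⁻¹) :=
        (ENNReal.add_right_inj hfin).1 (hX.trans hgoal2.symm)
      have hfinal := (ENNReal.mul_right_inj (by norm_num) (by norm_num)).1 h2
      rw [hfinal, div_eq_mul_inv]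

end SymPosAux

open SymPosAux

/-- If `σ` is an atomless, symmetric (invariant under negation) probability measure on `ℝ`
and `Z 0, …, Z (n-1)` are independent random variables each with law `σ`, then the
probability that all partial sums are strictly positive is `(2n choose n) / 4^n`. -/
theorem symmetric_partial_sums_positive_probability
    {Ω : Type*} [MeasurableSpace Ω] (P : Measure Ω) [IsProbabilityMeasure P]
    (σ : Measure ℝ) [IsProbabilityMeasure σ] (hatomless : ∀ x : ℝ, σ {x} = 0)
    (hsym : Measure.map (fun x : ℝ => -x) σ = σ)
    (n : ℕ) (hn : 1 ≤ n)
    (Z : Fin n → Ω → ℝ)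
    (hZmeas : ∀ i, Measurable (Z i))
    (hindep : iIndepFun Z P)
    (hZlaw : ∀ i, Measure.map (Z i) P = σ) :
    P {ω | ∀ k : ℕ, 1 ≤ k → k ≤ n →
        0 < ∑ i ∈ univ.filter (fun i : Fin n => (i : ℕ) < k), Z i ω} =
      (Nat.choose (2 * n) n : ℝ≥0∞) / 4 ^ n := by
  have hjointmeas : Measurable (fun ω i => Z i ω) :=
    measurable_pi_lambda _ fun i => hZmeas i
  have hjoint : Measure.map (fun ω i => Z i ω) P = piσ σ n := by
    unfold piσ
    refine (Measure.pi_eq (μ := fun _ : Fin n => σ) fun s hs => ?_).symm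
    rw [Measure.map_apply hjointmeas (MeasurableSet.univ_pi hs)]
    have hpre : (fun ω i => Z i ω) ⁻¹' Set.pi Set.univ s = ⋂ i ∈ Finset.univ, Z i ⁻¹' s i := by
      ext ω; simp
    rw [hpre, hindep.measure_inter_preimage_eq_mul Finset.univ (fun i _ => hs i)]
    exact Finset.prod_congr rfl fun i _ => by
      rw [← hZlaw i, Measure.map_apply (hZmeas i) (hs i)]
  have hevent : {ω | ∀ k : ℕ, 1 ≤ k → k ≤ n →
      0 < ∑ i ∈ univ.filter (fun i : Fin n => (i : ℕ) < k), Z i ω}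
      = (fun ω i => Z i ω) ⁻¹' PosSet n := rfl
  rw [hevent, ← Measure.map_apply hjointmeas (measurableSet_PosSet n), hjoint,
    pos_prob σ hatomless hsym n]
  rfl
end

section
/- Let n ≥ 1 and let a : Fin n → ℝ be a family of real numbers that is linearly independent over ℚ. Let b be the number of pairs (π, ε), where π is a permutation of Fin n and ε ∈ {−1,+1}^n, such that the signed permutation s_i = ε_i · a_{π(i)} satisfies ∑_{i=1}^k s_i > 0 for all 1 ≤ k ≤ n. Then 2^n · b = n! · (2n choose n); equivalently, b = (2n)!/(2^n · n!). -/
open Finset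

/-- The ballot property for the signed permutation determined by `(π, ε)` and the
family `a`: every partial sum `∑_{i<k} ε i • a (π i)` (for `1 ≤ k ≤ n`) is positive. -/
def SignedPermBallot {n : ℕ} (a : Fin n → ℝ) (p : Equiv.Perm (Fin n) × (Fin n → ℤˣ)) : Prop :=
  ∀ k : ℕ, 1 ≤ k → k ≤ n →
    0 < ∑ i ∈ univ.filter (fun i : Fin n => (i : ℕ) < k), ((p.2 i : ℤ) : ℝ) * a (p.1 i)

namespace BallotAux

abbrev SP (n : ℕ) := Equiv.Perm (Fin n) × (Fin n → ℤˣ)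

variable {n m : ℕ}

noncomputable def psum (v : Fin n → ℝ) (p : SP n) (k : ℕ) : ℝ :=
  ∑ i ∈ univ.filter (fun i : Fin n => (i : ℕ) < k), ((p.2 i : ℤ) : ℝ) * v (p.1 i)

lemma ballot_iff (v : Fin n → ℝ) (p : SP n) :
    SignedPermBallot v p ↔ ∀ k, 1 ≤ k → k ≤ n → 0 < psum v p k := Iff.rfl

noncomputable def NB (v : Fin n → ℝ) : ℕ := Nat.card {p : SP n // SignedPermBallot v p}

noncomputable def gsum (v : Fin n → ℝ) (T : Finset (Fin n)) (σ : Fin n → ℤˣ) : ℝ :=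
  ∑ j ∈ T, ((σ j : ℤ) : ℝ) * v j

def Generic (v : Fin n → ℝ) : Prop :=
  ∀ e : Fin n → ℤ, ∑ j, (e j : ℝ) * v j = 0 → ∀ j, e j = 0

def pσ (p : SP n) : Fin n → ℤˣ := fun j => p.2 (p.1.symm j)

def pT (p : SP n) (k : ℕ) : Finset (Fin n) :=
  (univ.filter (fun i : Fin n => (i : ℕ) < k)).image p.1

lemma card_filter_lt (k : ℕ) (h : k ≤ n) :
    (univ.filter (fun i : Fin n => (i : ℕ) < k)).card = k := by
  have : (univ.filter (fun i : Fin n => (i : ℕ) < k)) =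
      Finset.attachFin (Finset.range k) (fun x hx => lt_of_lt_of_le (Finset.mem_range.mp hx) h) := by
    ext i
    simp [Finset.mem_attachFin]
  rw [this, Finset.card_attachFin, Finset.card_range]

lemma pT_card (p : SP n) (k : ℕ) (h : k ≤ n) : (pT p k).card = k := by
  rw [pT, Finset.card_image_of_injective _ p.1.injective, card_filter_lt k h]

lemma pT_nonempty (p : SP n) {k : ℕ} (h1 : 1 ≤ k) (h2 : k ≤ n) : (pT p k).Nonempty := by
  refine ⟨p.1 ⟨0, by omega⟩, Finset.mem_image.mpr ⟨⟨0, by omega⟩, ?_, rfl⟩⟩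
  simp; omega

lemma psum_repr (v : Fin n → ℝ) (p : SP n) (k : ℕ) :
    psum v p k = gsum v (pT p k) (pσ p) := by
  unfold psum gsum pT
  rw [Finset.sum_image (fun x _ y _ hxy => p.1.injective hxy)]
  exact Finset.sum_congr rfl (fun i _ => by simp [pσ])

lemma gsum_congr (v : Fin n → ℝ) (T : Finset (Fin n)) {σ σ' : Fin n → ℤˣ}
    (h : ∀ j ∈ T, σ j = σ' j) : gsum v T σ = gsum v T σ' :=
  Finset.sum_congr rfl (fun j hj => by rw [h j hj])

lemma gsum_neg (v : Fin n → ℝ) (T : Finset (Fin n)) (σ : Fin n → ℤˣ) :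
    gsum v T (fun j => -σ j) = -gsum v T σ := by
  unfold gsum
  rw [← Finset.sum_neg_distrib]
  exact Finset.sum_congr rfl (fun j _ => by push_cast; ring)

lemma Generic.gsum_ne_zero {v : Fin n → ℝ} (hg : Generic v) {T : Finset (Fin n)}
    (hT : T.Nonempty) (σ : Fin n → ℤˣ) : gsum v T σ ≠ 0 := by
  intro h0
  set e : Fin n → ℤ := fun j => if j ∈ T then (σ j : ℤ) else 0 with he
  have hsum : ∑ j, ((e j : ℝ)) * v j = 0 := by
    have h1 : ∑ j, ((e j : ℝ)) * v j = ∑ j ∈ T, ((σ j : ℤ) : ℝ) * v j := by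
      rw [← Finset.sum_subset (Finset.subset_univ T)
        (fun x _ hx => by simp [he, hx])]
      exact Finset.sum_congr rfl fun j hj => by simp [he, hj]
    rw [h1]
    exact h0
  obtain ⟨j, hj⟩ := hT
  have hej := hg e hsum j
  rw [he] at hej
  simp only [if_pos hj] at hej
  exact (σ j).ne_zero hej

/-! ### update machinery -/

noncomputable def W (v : Fin (m+1) → ℝ) (t : ℝ) : Fin (m+1) → ℝ :=
  Function.update v (Fin.last m) t

noncomputable def gA (v : Fin (m+1) → ℝ) (T : Finset (Fin (m+1))) (σ : Fin (m+1) → ℤˣ) : ℝ :=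
  ∑ j ∈ T.erase (Fin.last m), ((σ j : ℤ) : ℝ) * v j

noncomputable def gB (T : Finset (Fin (m+1))) (σ : Fin (m+1) → ℤˣ) : ℝ :=
  if Fin.last m ∈ T then ((σ (Fin.last m) : ℤ) : ℝ) else 0

lemma gsum_W (v : Fin (m+1) → ℝ) (t : ℝ) (T : Finset (Fin (m+1))) (σ : Fin (m+1) → ℤˣ) :
    gsum (W v t) T σ = gA v T σ + gB T σ * t := by
  unfold gsum gA gB W
  by_cases hl : Fin.last m ∈ T
  · rw [if_pos hl, ← Finset.sum_erase_add T _ hl]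
    congr 1
    · exact Finset.sum_congr rfl fun j hj => by
        rw [Function.update_of_ne (Finset.ne_of_mem_erase hj)]
    · rw [Function.update_self]
  · rw [if_neg hl, zero_mul, add_zero, Finset.erase_eq_of_notMem hl]
    exact Finset.sum_congr rfl fun j hj => by
      rw [Function.update_of_ne (by rintro rfl; exact hl hj)]

lemma gsum_W_not_mem (v : Fin (m+1) → ℝ) (t : ℝ) {T : Finset (Fin (m+1))}
    (hl : Fin.last m ∉ T) (σ : Fin (m+1) → ℤˣ) : gsum (W v t) T σ = gsum v T σ :=
  Finset.sum_congr rfl fun j hj => by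
    rw [W, Function.update_of_ne (by rintro rfl; exact hl hj)]

lemma gB_abs_le (T : Finset (Fin (m+1))) (σ : Fin (m+1) → ℤˣ) : |gB T σ| ≤ 1 := by
  unfold gB
  split
  · rcases Int.units_eq_one_or (σ (Fin.last m)) with h | h <;> rw [h] <;> norm_num
  · norm_num

lemma gsum_W_sub (v : Fin (m+1) → ℝ) (t t' : ℝ) (T : Finset (Fin (m+1))) (σ : Fin (m+1) → ℤˣ) :
    |gsum (W v t) T σ - gsum (W v t') T σ| ≤ |t - t'| := by
  rw [gsum_W, gsum_W]
  have h1 : gA v T σ + gB T σ * t - (gA v T σ + gB T σ * t') = gB T σ * (t - t') := by ring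
  rw [h1, abs_mul]
  exact mul_le_of_le_one_left (abs_nonneg _) (gB_abs_le _ _)

noncomputable def crit (v : Fin (m+1) → ℝ) : Finset ℝ :=
  (univ : Finset (Finset (Fin (m+1)) × (Fin (m+1) → ℤˣ))).image
    fun q => -((q.2 (Fin.last m) : ℤ) : ℝ) * gA v q.1 q.2

lemma root_mem_crit {v : Fin (m+1) → ℝ} {t : ℝ} {T : Finset (Fin (m+1))} {σ : Fin (m+1) → ℤˣ}
    (h0 : gsum (W v t) T σ = 0) (hl : Fin.last m ∈ T) : t ∈ crit v := by
  rw [gsum_W, gB, if_pos hl] at h0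
  refine Finset.mem_image.mpr ⟨(T, σ), Finset.mem_univ _, ?_⟩
  dsimp only
  rcases Int.units_eq_one_or (σ (Fin.last m)) with h | h <;>
    rw [h] at h0 ⊢ <;> push_cast at h0 ⊢ <;> linarith

lemma vanish_last_mem {v : Fin (m+1) → ℝ} (hg : Generic v) {t : ℝ} {T : Finset (Fin (m+1))}
    {σ : Fin (m+1) → ℤˣ} (hT : T.Nonempty) (h0 : gsum (W v t) T σ = 0) :
    Fin.last m ∈ T ∧ t ∈ crit v := by
  by_cases hl : Fin.last m ∈ T
  · exact ⟨hl, root_mem_crit h0 hl⟩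
  · rw [gsum_W_not_mem v t hl σ] at h0
    exact absurd h0 (hg.gsum_ne_zero hT σ)

/-! ### small real lemmas -/

lemma pos_iff_near {x y : ℝ} (h : |x - y| < |y|) : 0 < x ↔ 0 < y := by
  constructor <;> intro h1
  · by_contra hy
    push_neg at hy
    rw [abs_of_nonpos hy] at h
    have := le_abs_self (x - y)
    linarith
  · rw [abs_of_pos h1] at h
    have := neg_abs_le (x - y)
    linarith

lemma affine_pos_iff {A B lo hi : ℝ} (hle : lo ≤ hi)
    (h : ∀ t, lo ≤ t → t ≤ hi → A + B * t ≠ 0) :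
    (0 < A + B * lo ↔ 0 < A + B * hi) := by
  have hcont : ContinuousOn (fun t : ℝ => A + B * t) (Set.Icc lo hi) :=
    Continuous.continuousOn (by continuity)
  constructor <;> intro h1 <;> by_contra h2 <;> push_neg at h2
  · have hhi : A + B * hi < 0 := lt_of_le_of_ne h2 (h hi hle le_rfl)
    obtain ⟨t, ht, h0⟩ := intermediate_value_Icc' hle hcont
      (Set.mem_Icc.mpr ⟨le_of_lt hhi, le_of_lt h1⟩)
    exact h t ht.1 ht.2 h0
  · have hlo : A + B * lo < 0 := lt_of_le_of_ne h2 (h lo le_rfl hle)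
    obtain ⟨t, ht, h0⟩ := intermediate_value_Icc hle hcont
      (Set.mem_Icc.mpr ⟨le_of_lt hlo, le_of_lt h1⟩)
    exact h t ht.1 ht.2 h0

/-! ### no-crossing -/

lemma NB_nocross {v : Fin (m+1) → ℝ} {lo hi : ℝ} (hle : lo ≤ hi)
    (h : ∀ (T : Finset (Fin (m+1))) (σ : Fin (m+1) → ℤˣ), T.Nonempty →
      ∀ t, lo ≤ t → t ≤ hi → gsum (W v t) T σ ≠ 0) :
    NB (W v lo) = NB (W v hi) := by
  unfold NB
  refine Nat.card_congr (Equiv.subtypeEquivRight fun p => ?_)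
  have key : ∀ k, 1 ≤ k → k ≤ m + 1 → (0 < psum (W v lo) p k ↔ 0 < psum (W v hi) p k) := by
    intro k h1 h2
    rw [psum_repr, psum_repr, gsum_W, gsum_W]
    refine affine_pos_iff hle (fun t htlo hthi => ?_)
    rw [← gsum_W]
    exact h _ _ (pT_nonempty p h1 h2) t htlo hthi
  rw [ballot_iff, ballot_iff]
  exact ⟨fun hb k h1 h2 => (key k h1 h2).mp (hb k h1 h2),
         fun hb k h1 h2 => (key k h1 h2).mpr (hb k h1 h2)⟩

def revFun (n t0 : ℕ) : Fin n → Fin n := fun i =>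
  if h : (i : ℕ) < t0 ∧ t0 ≤ n then ⟨t0 - 1 - (i : ℕ), by omega⟩ else i

lemma revFun_invol : Function.Involutive (revFun n t0) := by
  intro i
  unfold revFun
  by_cases h : (i : ℕ) < t0 ∧ t0 ≤ n
  · rw [dif_pos h, dif_pos ⟨(by omega : t0 - 1 - (i : ℕ) < t0), h.2⟩]
    exact Fin.ext (show t0 - 1 - (t0 - 1 - (i : ℕ)) = (i : ℕ) by omega)
  · rw [dif_neg h, dif_neg h]

def rev (n t0 : ℕ) : Equiv.Perm (Fin n) := (revFun_invol (n := n) (t0 := t0)).toPerm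

lemma rev_rev (i : Fin n) : rev n t0 (rev n t0 i) = i := revFun_invol i

lemma rev_symm : (rev n t0).symm = rev n t0 := by
  refine Equiv.ext fun i => ?_
  rw [Equiv.symm_apply_eq, rev_rev]

lemma rev_lt {t0 : ℕ} (ht : t0 ≤ n) {i : Fin n} (h : (i : ℕ) < t0) :
    ((rev n t0) i : ℕ) = t0 - 1 - (i : ℕ) := by
  show ((revFun n t0) i : ℕ) = _
  rw [revFun, dif_pos ⟨h, ht⟩]

lemma rev_ge {t0 : ℕ} {i : Fin n} (h : ¬ (i : ℕ) < t0) : (rev n t0) i = i := by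
  show revFun n t0 i = i
  rw [revFun, dif_neg (by tauto)]

lemma rev_mem_lt {t0 : ℕ} (ht : t0 ≤ n) {i : Fin n} (h : (i : ℕ) < t0) :
    ((rev n t0) i : ℕ) < t0 := by rw [rev_lt ht h]; omega

def J (t0 : ℕ) (p : SP n) : SP n :=
  ((rev n t0).trans p.1, fun i => if (i : ℕ) < t0 then -(p.2 ((rev n t0) i)) else p.2 i)

lemma J_invol {t0 : ℕ} (ht0 : t0 ≤ n) (p : SP n) : J t0 (J t0 p) = p := by
  unfold J
  refine Prod.ext (Equiv.ext fun i => ?_) (funext fun i => ?_)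
  · simp [Equiv.trans_apply, rev_rev]
  · by_cases hi : (i : ℕ) < t0
    · simp only [hi, if_true, rev_mem_lt ht0 hi, rev_rev, neg_neg]
    · simp only [hi, if_false]

lemma psum_zero (v : Fin n → ℝ) (p : SP n) : psum v p 0 = 0 := by
  unfold psum
  rw [Finset.filter_false_of_mem (by intro i _; omega), Finset.sum_empty]

lemma psum_split (v : Fin n → ℝ) (p : SP n) {k1 k2 : ℕ} (h : k1 ≤ k2) :
    psum v p k2 = psum v p k1 +
      ∑ i ∈ univ.filter (fun i : Fin n => k1 ≤ (i : ℕ) ∧ (i : ℕ) < k2),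
        ((p.2 i : ℤ) : ℝ) * v (p.1 i) := by
  unfold psum
  have hsub : (univ.filter (fun i : Fin n => (i : ℕ) < k1)) ⊆
      (univ.filter (fun i : Fin n => (i : ℕ) < k2)) := by
    intro i hi
    simp only [mem_filter, mem_univ, true_and] at hi ⊢
    omega
  have hsd := Finset.sum_sdiff (f := fun i : Fin n => ((p.2 i : ℤ) : ℝ) * v (p.1 i)) hsub
  have hband : (univ.filter (fun i : Fin n => (i : ℕ) < k2)) \
      (univ.filter (fun i : Fin n => (i : ℕ) < k1)) =
      univ.filter (fun i : Fin n => k1 ≤ (i : ℕ) ∧ (i : ℕ) < k2) := by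
    ext i
    simp only [Finset.mem_sdiff, mem_filter, mem_univ, true_and]
    omega
  rw [hband] at hsd
  linarith

lemma image_rev_filter {t0 k : ℕ} (ht0 : t0 ≤ n) (hk : k ≤ t0) :
    (univ.filter (fun i : Fin n => (i : ℕ) < k)).image (rev n t0)
      = univ.filter (fun i : Fin n => t0 - k ≤ (i : ℕ) ∧ (i : ℕ) < t0) := by
  ext j
  simp only [Finset.mem_image, mem_filter, mem_univ, true_and]
  constructor
  · rintro ⟨i, hi, rfl⟩
    rw [rev_lt ht0 (lt_of_lt_of_le hi hk)]
    omega
  · rintro ⟨h1, h2⟩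
    refine ⟨rev n t0 j, ?_, rev_rev j⟩
    rw [rev_lt ht0 h2]
    omega

lemma psum_J_le (v : Fin n → ℝ) (p : SP n) {t0 k : ℕ} (ht0 : t0 ≤ n) (hk : k ≤ t0) :
    psum v (J t0 p) k = psum v p (t0 - k) - psum v p t0 := by
  have hterm : ∀ i ∈ univ.filter (fun i : Fin n => (i : ℕ) < k),
      (((J t0 p).2 i : ℤ) : ℝ) * v ((J t0 p).1 i)
        = -((((p.2 ((rev n t0) i)) : ℤ) : ℝ) * v (p.1 ((rev n t0) i))) := by
    intro i hi
    have hik : (i : ℕ) < k := by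
      simpa using (Finset.mem_filter.mp hi).2
    show (((if (i : ℕ) < t0 then -(p.2 ((rev n t0) i)) else p.2 i : ℤˣ) : ℤ) : ℝ) *
        v (p.1 ((rev n t0) i)) = _
    rw [if_pos (lt_of_lt_of_le hik hk)]
    push_cast
    ring
  have h1 : psum v (J t0 p) k =
      -∑ i ∈ univ.filter (fun i : Fin n => (i : ℕ) < k),
        (((p.2 ((rev n t0) i)) : ℤ) : ℝ) * v (p.1 ((rev n t0) i)) := by
    unfold psum
    rw [Finset.sum_congr rfl hterm]
    exact Finset.sum_neg_distrib (f := fun i => (((p.2 ((rev n t0) i)) : ℤ) : ℝ) * v (p.1 ((rev n t0) i)))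
  have h2 : ∑ i ∈ univ.filter (fun i : Fin n => (i : ℕ) < k),
        (((p.2 ((rev n t0) i)) : ℤ) : ℝ) * v (p.1 ((rev n t0) i))
      = ∑ j ∈ univ.filter (fun i : Fin n => t0 - k ≤ (i : ℕ) ∧ (i : ℕ) < t0),
        ((p.2 j : ℤ) : ℝ) * v (p.1 j) := by
    rw [← image_rev_filter ht0 hk,
      Finset.sum_image (fun x _ y _ hxy => (rev n t0).injective hxy)]
  have h3 := psum_split v p (Nat.sub_le t0 k)
  rw [h1, h2]
  linarith
lemma psum_J_t0 (v : Fin n → ℝ) (p : SP n) {t0 : ℕ} (ht0 : t0 ≤ n) :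
    psum v (J t0 p) t0 = -psum v p t0 := by
  rw [psum_J_le v p ht0 le_rfl, Nat.sub_self, psum_zero]
  ring

lemma psum_J_ge (v : Fin n → ℝ) (p : SP n) {t0 k : ℕ} (ht0 : t0 ≤ n) (hk : t0 ≤ k) :
    psum v (J t0 p) k = psum v p k - 2 * psum v p t0 := by
  have h1 := psum_split v (J t0 p) hk
  have h2 := psum_split v p hk
  have hterm : ∀ i ∈ univ.filter (fun i : Fin n => t0 ≤ (i : ℕ) ∧ (i : ℕ) < k),
      (((J t0 p).2 i : ℤ) : ℝ) * v ((J t0 p).1 i) = ((p.2 i : ℤ) : ℝ) * v (p.1 i) := by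
    intro i hi
    have hik : t0 ≤ (i : ℕ) := by
      have := (Finset.mem_filter.mp hi).2
      simpa using this.1
    have hnot : ¬ (i : ℕ) < t0 := by omega
    show (((if (i : ℕ) < t0 then -(p.2 ((rev n t0) i)) else p.2 i : ℤˣ) : ℤ) : ℝ) *
        v (p.1 ((rev n t0) i)) = _
    rw [if_neg hnot, rev_ge hnot]
  rw [Finset.sum_congr rfl hterm] at h1
  rw [psum_J_t0 v p ht0] at h1
  linarith

lemma pT_J (p : SP n) {t0 : ℕ} (ht0 : t0 ≤ n) : pT (J t0 p) t0 = pT p t0 := by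
  unfold pT J
  have h1 : (univ.filter (fun i : Fin n => (i : ℕ) < t0)).image (⇑((rev n t0).trans p.1))
      = ((univ.filter (fun i : Fin n => (i : ℕ) < t0)).image (rev n t0)).image p.1 := by
    rw [Finset.image_image]
    rfl
  rw [h1, image_rev_filter ht0 le_rfl]
  congr 1
  ext i
  simp only [mem_filter, mem_univ, true_and]
  omega

lemma pσ_J (p : SP n) {t0 : ℕ} (ht0 : t0 ≤ n) {j : Fin n} (hj : j ∈ pT p t0) :
    pσ (J t0 p) j = -pσ p j := by
  obtain ⟨i0, hi0, rfl⟩ := Finset.mem_image.mp hj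
  have hi0' : (i0 : ℕ) < t0 := by simpa using (Finset.mem_filter.mp hi0).2
  unfold pσ J
  have hsymm : ((rev n t0).trans p.1).symm (p.1 i0) = rev n t0 i0 := by
    rw [Equiv.symm_apply_eq]
    simp [Equiv.trans_apply, rev_rev]
  rw [hsymm]
  show (if ((rev n t0 i0 : Fin n) : ℕ) < t0 then -(p.2 ((rev n t0) (rev n t0 i0))) else p.2 (rev n t0 i0)) = -p.2 (p.1.symm (p.1 i0))
  rw [if_pos (rev_mem_lt ht0 hi0'), rev_rev, Equiv.symm_apply_apply]



lemma NB_cross (v : Fin (m+1) → ℝ) {c η : ℝ} (hη : 0 < η)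
    (T₀ : Finset (Fin (m+1))) (σ₀ : Fin (m+1) → ℤˣ)
    (hT₀ : Fin.last m ∈ T₀)
    (h0 : gsum (W v c) T₀ σ₀ = 0)
    (huniq : ∀ (T : Finset (Fin (m+1))) (σ : Fin (m+1) → ℤˣ), T.Nonempty →
       gsum (W v c) T σ = 0 →
       T = T₀ ∧ ((∀ j ∈ T₀, σ j = σ₀ j) ∨ (∀ j ∈ T₀, σ j = -σ₀ j)))
    (hquant : ∀ (T : Finset (Fin (m+1))) (σ : Fin (m+1) → ℤˣ), T.Nonempty →
       gsum (W v c) T σ ≠ 0 → 4 * η ≤ |gsum (W v c) T σ|) :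
    NB (W v (c + η)) = NB (W v (c - η)) := by
  classical
  set t0 := T₀.card with ht0def
  have ht0n : t0 ≤ m + 1 := by
    calc t0 ≤ (univ : Finset (Fin (m+1))).card := Finset.card_le_univ T₀
    _ = m + 1 := by simp
  have ht01 : 1 ≤ t0 := Finset.card_pos.mpr ⟨_, hT₀⟩
  -- abbreviations
  have habsp : |(c + η) - c| = η := by
    rw [add_sub_cancel_left]; exact abs_of_pos hη
  have habsm : |(c - η) - c| = η := by
    rw [sub_sub_cancel_left, abs_neg]; exact abs_of_pos hη
  -- basic facts
  have hF0 : ∀ (p : SP (m+1)) (k : ℕ) (t : ℝ),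
      |psum (W v t) p k - psum (W v c) p k| ≤ |t - c| := by
    intro p k t
    rw [psum_repr, psum_repr]
    exact gsum_W_sub v t c _ _
  have hnear : ∀ (x y : ℝ), 4 * η ≤ |y| → |x - y| ≤ 3 * η → (0 < x ↔ 0 < y) :=
    fun x y hy hxy => pos_iff_near (lt_of_le_of_lt hxy (by linarith))
  have habs4 : ∀ (p : SP (m+1)) (k : ℕ), 1 ≤ k → k ≤ m + 1 →
      psum (W v c) p k ≠ 0 → 4 * η ≤ |psum (W v c) p k| := by
    intro p k h1 h2 hnz
    rw [psum_repr] at hnz ⊢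
    exact hquant _ _ (pT_nonempty p h1 h2) hnz
  have hVcnz : ∀ (p : SP (m+1)) (k : ℕ), 1 ≤ k → k ≤ m + 1 → k ≠ t0 →
      psum (W v c) p k ≠ 0 := by
    intro p k h1 h2 hne h0'
    rw [psum_repr] at h0'
    obtain ⟨hTeq, -⟩ := huniq _ _ (pT_nonempty p h1 h2) h0'
    exact hne (by rw [← pT_card p k h2, hTeq])
  -- the wall pair functional
  have e0 : gA v T₀ σ₀ + gB T₀ σ₀ * c = 0 := by rw [← gsum_W]; exact h0
  have hγp : gsum (W v (c + η)) T₀ σ₀ = gB T₀ σ₀ * η := by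
    rw [gsum_W, mul_add]; linarith
  have hγm : gsum (W v (c - η)) T₀ σ₀ = -(gB T₀ σ₀ * η) := by
    rw [gsum_W, mul_sub]; linarith
  -- predicates
  set Pp : SP (m+1) → Prop := fun p => pT p t0 = T₀ ∧ ∀ j ∈ T₀, pσ p j = σ₀ j with hPp
  set Pm : SP (m+1) → Prop := fun p => pT p t0 = T₀ ∧ ∀ j ∈ T₀, pσ p j = -σ₀ j with hPm
  set InP : SP (m+1) → Prop := fun p => Pp p ∨ Pm p with hInP
  have hsig : ∀ p, InP p → ∃ d : ℝ, (d = 1 ∨ d = -1) ∧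
      ∀ t : ℝ, psum (W v t) p t0 = d * gsum (W v t) T₀ σ₀ := by
    rintro p (⟨hpT, hpσ⟩ | ⟨hpT, hpσ⟩)
    · refine ⟨1, Or.inl rfl, fun t => ?_⟩
      rw [psum_repr, hpT, one_mul]
      exact gsum_congr _ _ (fun j hj => hpσ j hj)
    · refine ⟨-1, Or.inr rfl, fun t => ?_⟩
      rw [psum_repr, hpT,
        gsum_congr (W v t) T₀ (σ' := fun j => -σ₀ j) (fun j hj => hpσ j hj), gsum_neg]
      ring
  have hVct00 : ∀ p, InP p → psum (W v c) p t0 = 0 := by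
    intro p hp
    obtain ⟨d, -, hd⟩ := hsig p hp
    rw [hd c, h0, mul_zero]
  have ht0small : ∀ p, InP p → ∀ (t : ℝ), |t - c| ≤ η → |psum (W v t) p t0| ≤ η := by
    intro p hp t ht
    have := hF0 p t0 t
    rw [hVct00 p hp, sub_zero] at this
    exact le_trans this ht
  -- neutral case nonvanishing at t0
  have hVct0nz : ∀ p, ¬ InP p → psum (W v c) p t0 ≠ 0 := by
    intro p hp h0'
    rw [psum_repr] at h0'
    obtain ⟨hTeq, hσ⟩ := huniq _ _ (pT_nonempty p ht01 ht0n) h0'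
    exact hp (hσ.elim (fun h => Or.inl ⟨hTeq, h⟩) (fun h => Or.inr ⟨hTeq, h⟩))
  -- sign transfer for p itself
  have hstep : ∀ (t : ℝ), |t - c| ≤ η → ∀ (p : SP (m+1)) (k : ℕ), 1 ≤ k → k ≤ m + 1 →
      psum (W v c) p k ≠ 0 → (0 < psum (W v t) p k ↔ 0 < psum (W v c) p k) := by
    intro t ht p k h1 h2 hnz
    exact hnear _ _ (habs4 p k h1 h2 hnz) (le_trans (hF0 p k t) (by linarith))
  -- sign transfer for J p at c - η
  have hJiff : ∀ p, InP p → ∀ k, 1 ≤ k → k ≤ m + 1 → k ≠ t0 →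
      (0 < psum (W v (c - η)) (J t0 p) k ↔
        0 < psum (W v c) p (if k < t0 then t0 - k else k)) := by
    intro p hp k h1 h2 hne
    by_cases hk : k < t0
    · rw [if_pos hk, psum_J_le (W v (c-η)) p ht0n (le_of_lt hk)]
      have hb1 : |psum (W v (c-η)) p (t0 - k) - psum (W v c) p (t0 - k)| ≤ η :=
        le_trans (hF0 p (t0-k) (c-η)) (le_of_eq habsm)
      have hb2 := ht0small p hp (c - η) (le_of_eq habsm)
      have hnz' : psum (W v c) p (t0 - k) ≠ 0 :=
        hVcnz p (t0 - k) (by omega) (by omega) (by omega)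
      refine hnear _ _ (habs4 p (t0-k) (by omega) (by omega) hnz') ?_
      have := abs_sub_abs_le_abs_sub (psum (W v (c-η)) p (t0-k)) (psum (W v c) p (t0-k))
      calc |psum (W v (c-η)) p (t0-k) - psum (W v (c-η)) p t0 - psum (W v c) p (t0-k)|
          ≤ |psum (W v (c-η)) p (t0-k) - psum (W v c) p (t0-k)| + |psum (W v (c-η)) p t0| := by
            have := abs_sub (psum (W v (c-η)) p (t0-k) - psum (W v c) p (t0-k)) (psum (W v (c-η)) p t0)
            have heq : psum (W v (c-η)) p (t0-k) - psum (W v (c-η)) p t0 - psum (W v c) p (t0-k)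
                = (psum (W v (c-η)) p (t0-k) - psum (W v c) p (t0-k)) - psum (W v (c-η)) p t0 := by ring
            rw [heq]
            exact abs_sub _ _
        _ ≤ 3 * η := by linarith
    · have hk' : t0 ≤ k := by omega
      rw [if_neg hk, psum_J_ge (W v (c-η)) p ht0n hk']
      have hb1 : |psum (W v (c-η)) p k - psum (W v c) p k| ≤ η :=
        le_trans (hF0 p k (c-η)) (le_of_eq habsm)
      have hb2 := ht0small p hp (c - η) (le_of_eq habsm)
      have hnz' : psum (W v c) p k ≠ 0 := hVcnz p k h1 h2 hne
      refine hnear _ _ (habs4 p k h1 h2 hnz') ?_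
      have heq : psum (W v (c-η)) p k - 2 * psum (W v (c-η)) p t0 - psum (W v c) p k
          = (psum (W v (c-η)) p k - psum (W v c) p k) - 2 * psum (W v (c-η)) p t0 := by ring
      calc |psum (W v (c-η)) p k - 2 * psum (W v (c-η)) p t0 - psum (W v c) p k|
          = |(psum (W v (c-η)) p k - psum (W v c) p k) - 2 * psum (W v (c-η)) p t0| := by rw [heq]
        _ ≤ |psum (W v (c-η)) p k - psum (W v c) p k| + |2 * psum (W v (c-η)) p t0| := abs_sub _ _
        _ ≤ η + 2 * η := by
            have : |2 * psum (W v (c-η)) p t0| = 2 * |psum (W v (c-η)) p t0| := by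
              rw [abs_mul]; norm_num
            rw [this]; linarith
        _ = 3 * η := by ring
  -- equality at k = t0
  have ht0eq : ∀ p, InP p →
      psum (W v (c - η)) (J t0 p) t0 = psum (W v (c + η)) p t0 := by
    intro p hp
    obtain ⟨d, -, hd⟩ := hsig p hp
    rw [psum_J_t0 _ _ ht0n, hd (c - η), hd (c + η), hγm, hγp]
    ring
  -- InP behavior under J
  have hJP : ∀ p, InP p → InP (J t0 p) := by
    rintro p (⟨hpT, hpσ⟩ | ⟨hpT, hpσ⟩)
    · refine Or.inr ⟨by rw [pT_J p ht0n, hpT], fun j hj => ?_⟩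
      rw [pσ_J p ht0n (by rw [hpT]; exact hj), hpσ j hj]
    · refine Or.inl ⟨by rw [pT_J p ht0n, hpT], fun j hj => ?_⟩
      rw [pσ_J p ht0n (by rw [hpT]; exact hj), hpσ j hj, neg_neg]
  -- the bijection
  set Φ : SP (m+1) → SP (m+1) := fun p => if InP p then J t0 p else p with hΦ
  have hΦΦ : ∀ p, Φ (Φ p) = p := by
    intro p
    by_cases hp : InP p
    · rw [hΦ]
      simp only [if_pos hp, if_pos (hJP p hp)]
      exact J_invol ht0n p
    · rw [hΦ]; simp only [if_neg hp, if_neg hp]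
  have hmain : ∀ p, SignedPermBallot (W v (c + η)) p ↔ SignedPermBallot (W v (c - η)) (Φ p) := by
    intro p
    by_cases hp : InP p
    · rw [hΦ]
      simp only [if_pos hp]
      rw [ballot_iff, ballot_iff]
      constructor
      · intro hb k h1 h2
        by_cases hkt : k = t0
        · rw [hkt, ht0eq p hp]
          exact hb t0 ht01 ht0n
        · rw [hJiff p hp k h1 h2 hkt]
          by_cases hk : k < t0
          · rw [if_pos hk]
            exact (hstep (c + η) (le_of_eq habsp) p (t0 - k) (by omega) (by omega)
              (hVcnz p (t0-k) (by omega) (by omega) (by omega))).mp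
              (hb (t0 - k) (by omega) (by omega))
          · rw [if_neg hk]
            exact (hstep (c + η) (le_of_eq habsp) p k h1 h2
              (hVcnz p k h1 h2 hkt)).mp (hb k h1 h2)
      · intro hb k h1 h2
        by_cases hkt : k = t0
        · rw [hkt, ← ht0eq p hp]
          exact hb t0 ht01 ht0n
        · refine (hstep (c + η) (le_of_eq habsp) p k h1 h2 (hVcnz p k h1 h2 hkt)).mpr ?_
          by_cases hk : k < t0
          · have h3 := (hJiff p hp (t0 - k) (by omega) (by omega) (by omega)).mp
              (hb (t0 - k) (by omega) (by omega))
            rw [if_pos (by omega : t0 - k < t0)] at h3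
            have hkk : t0 - (t0 - k) = k := by omega
            rwa [hkk] at h3
          · have h3 := (hJiff p hp k h1 h2 hkt).mp (hb k h1 h2)
            rwa [if_neg hk] at h3
    · rw [hΦ]
      simp only [if_neg hp]
      rw [ballot_iff, ballot_iff]
      have hknz : ∀ k, 1 ≤ k → k ≤ m + 1 → psum (W v c) p k ≠ 0 := by
        intro k h1 h2
        by_cases hkt : k = t0
        · rw [hkt]; exact hVct0nz p hp
        · exact hVcnz p k h1 h2 hkt
      constructor
      · intro hb k h1 h2
        exact (hstep (c - η) (le_of_eq habsm) p k h1 h2 (hknz k h1 h2)).mpr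
          ((hstep (c + η) (le_of_eq habsp) p k h1 h2 (hknz k h1 h2)).mp (hb k h1 h2))
      · intro hb k h1 h2
        exact (hstep (c + η) (le_of_eq habsp) p k h1 h2 (hknz k h1 h2)).mpr
          ((hstep (c - η) (le_of_eq habsm) p k h1 h2 (hknz k h1 h2)).mp (hb k h1 h2))
  unfold NB
  refine Nat.card_congr ⟨fun x => ⟨Φ x.1, (hmain x.1).mp x.2⟩,
    fun y => ⟨Φ y.1, (hmain (Φ y.1)).mpr (by rw [hΦΦ]; exact y.2)⟩, ?_, ?_⟩
  · intro x
    exact Subtype.ext (hΦΦ x.1)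
  · intro y
    exact Subtype.ext (hΦΦ y.1)


lemma sum_ite_gA (v : Fin (m+1) → ℝ) (T : Finset (Fin (m+1))) (σ : Fin (m+1) → ℤˣ) :
    ∑ j, (((if j ∈ T.erase (Fin.last m) then (σ j : ℤ) else 0 : ℤ)) : ℝ) * v j = gA v T σ := by
  have h1 : ∑ j, (((if j ∈ T.erase (Fin.last m) then (σ j : ℤ) else 0 : ℤ)) : ℝ) * v j
      = ∑ j ∈ T.erase (Fin.last m), ((σ j : ℤ) : ℝ) * v j := by
    rw [← Finset.sum_subset (Finset.subset_univ (T.erase (Fin.last m)))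
      (fun x _ hx => by simp [hx])]
    exact Finset.sum_congr rfl fun j hj => by simp [hj]
  rw [h1]
  rfl

lemma unit_sq (u : ℤˣ) : ((u : ℤ) : ℝ) * ((u : ℤ) : ℝ) = 1 := by
  rcases Int.units_eq_one_or u with h | h <;> rw [h] <;> norm_num

/-- uniqueness of the wall at a given parameter value -/
lemma wall_uniq {v : Fin (m+1) → ℝ} (hg : Generic v) {c : ℝ}
    {T₀ : Finset (Fin (m+1))} {σ₀ : Fin (m+1) → ℤˣ} (hT₀ : T₀.Nonempty)
    (h0 : gsum (W v c) T₀ σ₀ = 0) :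
    ∀ (T : Finset (Fin (m+1))) (σ : Fin (m+1) → ℤˣ), T.Nonempty →
      gsum (W v c) T σ = 0 →
      T = T₀ ∧ ((∀ j ∈ T₀, σ j = σ₀ j) ∨ (∀ j ∈ T₀, σ j = -σ₀ j)) := by
  intro T σ hT h0'
  have hl₀ : Fin.last m ∈ T₀ := (vanish_last_mem hg hT₀ h0).1
  have hl : Fin.last m ∈ T := (vanish_last_mem hg hT h0').1
  rw [gsum_W, gB, if_pos hl₀] at h0
  rw [gsum_W, gB, if_pos hl] at h0'
  set s : ℤˣ := σ (Fin.last m) * σ₀ (Fin.last m) with hs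
  set e : Fin (m+1) → ℤ := fun j =>
    (if j ∈ T.erase (Fin.last m) then (σ j : ℤ) else 0) -
      (s : ℤ) * (if j ∈ T₀.erase (Fin.last m) then (σ₀ j : ℤ) else 0) with he
  have hsum : ∑ j, (e j : ℝ) * v j = 0 := by
    have h2 : ∀ j, (e j : ℝ) * v j =
        (((if j ∈ T.erase (Fin.last m) then (σ j : ℤ) else 0 : ℤ)) : ℝ) * v j
          - ((s : ℤ) : ℝ) * ((((if j ∈ T₀.erase (Fin.last m) then (σ₀ j : ℤ) else 0 : ℤ)) : ℝ) * v j) := by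
      intro j
      rw [he]
      push_cast
      ring
    rw [Finset.sum_congr rfl (fun j _ => h2 j), Finset.sum_sub_distrib, ← Finset.mul_sum,
      sum_ite_gA, sum_ite_gA]
    have hsq := unit_sq (σ₀ (Fin.last m))
    have hscast : ((s : ℤ) : ℝ) = ((σ (Fin.last m) : ℤ) : ℝ) * ((σ₀ (Fin.last m) : ℤ) : ℝ) := by
      rw [hs]; push_cast; ring
    rw [hscast]
    linear_combination h0' - ((σ (Fin.last m) : ℤ) : ℝ) * ((σ₀ (Fin.last m) : ℤ) : ℝ) * h0 +
      ((σ (Fin.last m) : ℤ) : ℝ) * c * hsq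
  have he0 := hg e hsum
  have herase : T.erase (Fin.last m) = T₀.erase (Fin.last m) := by
    ext j
    constructor
    · intro hj
      by_contra hj'
      have := he0 j
      rw [he] at this
      simp only [if_pos hj, if_neg hj', mul_zero, sub_zero] at this
      exact (σ j).ne_zero this
    · intro hj
      by_contra hj'
      have := he0 j
      rw [he] at this
      simp only [if_neg hj', if_pos hj, zero_sub, neg_eq_zero, mul_eq_zero] at this
      rcases this with h | h
      · exact (s).ne_zero h
      · exact (σ₀ j).ne_zero h
  have hTeq : T = T₀ := by
    ext j
    by_cases hjl : j = Fin.last m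
    · subst hjl; simp [hl, hl₀]
    · constructor
      · intro hj
        have : j ∈ T₀.erase (Fin.last m) := herase ▸ Finset.mem_erase.mpr ⟨hjl, hj⟩
        exact Finset.mem_of_mem_erase this
      · intro hj
        have : j ∈ T.erase (Fin.last m) := herase.symm ▸ Finset.mem_erase.mpr ⟨hjl, hj⟩
        exact Finset.mem_of_mem_erase this
  refine ⟨hTeq, ?_⟩
  have hall : ∀ j ∈ T₀, σ j = s * σ₀ j := by
    intro j hj
    by_cases hjl : j = Fin.last m
    · subst hjl
      apply Units.ext
      push_cast [hs]
      rcases Int.units_eq_one_or (σ₀ (Fin.last m)) with h | h <;> rw [h] <;> push_cast <;> ring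
    · have hjmem : j ∈ T.erase (Fin.last m) := by
        rw [herase]; exact Finset.mem_erase.mpr ⟨hjl, hj⟩
      have := he0 j
      rw [he] at this
      simp only [if_pos hjmem, if_pos (herase ▸ hjmem)] at this
      apply Units.ext
      push_cast
      omega
  rcases Int.units_eq_one_or s with h | h
  · left; intro j hj; rw [hall j hj, h, one_mul]
  · right; intro j hj; rw [hall j hj, h]; exact neg_one_mul _

lemma NB_seg (v : Fin (m+1) → ℝ) (hg : Generic v) :
    ∀ (K : ℕ) (lo hi : ℝ), lo ≤ hi → lo ∉ crit v → hi ∉ crit v →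
      ((crit v).filter (fun t => lo < t ∧ t < hi)).card ≤ K →
      NB (W v lo) = NB (W v hi) := by
  intro K
  induction K with
  | zero =>
    intro lo hi hle hlo hhi hcard
    apply NB_nocross hle
    intro T σ hT t ht1 ht2 h0
    obtain ⟨hlmem, hcrit⟩ := vanish_last_mem hg hT h0
    rcases eq_or_lt_of_le ht1 with h | h
    · exact hlo (h ▸ hcrit)
    rcases eq_or_lt_of_le ht2 with h' | h'
    · exact hhi (h' ▸ hcrit)
    have hmem : t ∈ (crit v).filter (fun t => lo < t ∧ t < hi) :=
      Finset.mem_filter.mpr ⟨hcrit, h, h'⟩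
    rw [Finset.card_eq_zero.mp (Nat.le_zero.mp hcard)] at hmem
    exact absurd hmem (Finset.notMem_empty t)
  | succ K ih =>
    intro lo hi hle hlo hhi hcard
    by_cases hne : ((crit v).filter (fun t => lo < t ∧ t < hi)).Nonempty
    · set S := (crit v).filter (fun t => lo < t ∧ t < hi) with hS
      set c := S.max' hne with hc
      have hcmem := S.max'_mem hne
      have hcS : c ∈ crit v ∧ lo < c ∧ c < hi := by
        have := Finset.mem_filter.mp hcmem
        exact ⟨this.1, this.2.1, this.2.2⟩
      classical
      set Q1 : Finset ℝ := ((crit v).erase c).image (fun x => |x - c| / 2) with hQ1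
      set Q2 : Finset ℝ := (((univ : Finset (Finset (Fin (m+1)) × (Fin (m+1) → ℤˣ))).image
          (fun q => |gsum (W v c) q.1 q.2| / 4)).filter (fun y => 0 < y)) with hQ2
      set Q : Finset ℝ := insert ((hi - c)/2) (insert ((c - lo)/2) (Q1 ∪ Q2)) with hQ
      have hQne : Q.Nonempty := ⟨_, Finset.mem_insert_self _ _⟩
      set η := Q.min' hQne with hηdef
      have hηmem : ∀ y ∈ Q, η ≤ y := fun y hy => Finset.min'_le Q y hy
      have hηpos : 0 < η := by
        rw [hηdef, Finset.lt_min'_iff]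
        intro y hy
        rw [hQ] at hy
        rcases Finset.mem_insert.mp hy with h | hy
        · rw [h]; linarith [hcS.2.2]
        rcases Finset.mem_insert.mp hy with h | hy
        · rw [h]; linarith [hcS.2.1]
        rcases Finset.mem_union.mp hy with hy | hy
        · rw [hQ1] at hy
          obtain ⟨x, hx, rfl⟩ := Finset.mem_image.mp hy
          have hxc : x ≠ c := (Finset.mem_erase.mp hx).1
          have : 0 < |x - c| := abs_pos.mpr (sub_ne_zero.mpr hxc)
          linarith
        · rw [hQ2] at hy
          exact (Finset.mem_filter.mp hy).2
      have hηhi : η ≤ (hi - c)/2 := hηmem _ (Finset.mem_insert_self _ _)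
      have hηlo : η ≤ (c - lo)/2 := hηmem _ (Finset.mem_insert.mpr (Or.inr (Finset.mem_insert_self _ _)))
      have hQ1le : ∀ x ∈ (crit v).erase c, η ≤ |x - c| / 2 := by
        intro x hx
        exact hηmem _ (Finset.mem_insert.mpr (Or.inr (Finset.mem_insert.mpr (Or.inr
          (Finset.mem_union_left _ (Finset.mem_image_of_mem _ hx))))))
      have hQ2le : ∀ (T : Finset (Fin (m+1))) (σ : Fin (m+1) → ℤˣ),
          gsum (W v c) T σ ≠ 0 → 4 * η ≤ |gsum (W v c) T σ| := by
        intro T σ hnz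
        have hy : |gsum (W v c) T σ| / 4 ∈ Q2 := by
          rw [hQ2]
          refine Finset.mem_filter.mpr ⟨Finset.mem_image.mpr ⟨(T, σ), Finset.mem_univ _, rfl⟩, ?_⟩
          have : 0 < |gsum (W v c) T σ| := abs_pos.mpr hnz
          positivity
        have := hηmem _ (Finset.mem_insert.mpr (Or.inr (Finset.mem_insert.mpr (Or.inr
          (Finset.mem_union_right _ hy)))))
        linarith
      have hnotcrit : ∀ x : ℝ, |x - c| ≤ η → x ≠ c → x ∉ crit v := by
        intro x hx hxc hmem
        have := hQ1le x (Finset.mem_erase.mpr ⟨hxc, hmem⟩)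
        linarith
      have hcp : c + η ∉ crit v :=
        hnotcrit _ (by rw [add_sub_cancel_left, abs_of_pos hηpos]) (by linarith)
      have hcm : c - η ∉ crit v :=
        hnotcrit _ (by rw [sub_sub_cancel_left, abs_neg, abs_of_pos hηpos]) (by linarith)
      -- step A : [c+η, hi]
      have hstepA : NB (W v (c + η)) = NB (W v hi) := by
        apply NB_nocross (by linarith)
        intro T σ hT t ht1 ht2 h0
        obtain ⟨-, hcrit⟩ := vanish_last_mem hg hT h0
        rcases eq_or_lt_of_le ht2 with h' | h'
        · exact hhi (h' ▸ hcrit)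
        have : t ∈ S := Finset.mem_filter.mpr ⟨hcrit, by linarith [hcS.2.1], h'⟩
        have := Finset.le_max' S t this
        rw [← hc] at this
        linarith
      -- step C : [lo, c-η]
      have hstepC : NB (W v lo) = NB (W v (c - η)) := by
        apply ih lo (c - η) (by linarith) hlo hcm
        have hsub : (crit v).filter (fun t => lo < t ∧ t < c - η) ⊆ S.erase c := by
          intro x hx
          obtain ⟨hx1, hx2, hx3⟩ := Finset.mem_filter.mp hx
          refine Finset.mem_erase.mpr ⟨by intro h; rw [h] at hx3; linarith, ?_⟩
          exact Finset.mem_filter.mpr ⟨hx1, hx2, by linarith [hcS.2.2]⟩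
        have := Finset.card_le_card hsub
        rw [Finset.card_erase_of_mem hcmem] at this
        omega
      -- step B : across c
      have hstepB : NB (W v (c + η)) = NB (W v (c - η)) := by
        by_cases hwall : ∃ (T : Finset (Fin (m+1))) (σ : Fin (m+1) → ℤˣ),
            T.Nonempty ∧ gsum (W v c) T σ = 0
        · obtain ⟨T₀, σ₀, hT₀ne, h0⟩ := hwall
          have hT₀l : Fin.last m ∈ T₀ := (vanish_last_mem hg hT₀ne h0).1
          exact NB_cross v hηpos T₀ σ₀ hT₀l h0 (wall_uniq hg hT₀ne h0)
            (fun T σ hT hnz => hQ2le T σ hnz)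
        · have := NB_nocross (v := v) (lo := c - η) (hi := c + η) (by linarith) ?_
          · exact this.symm
          · intro T σ hT t ht1 ht2 h0
            obtain ⟨-, hcrit⟩ := vanish_last_mem hg hT h0
            by_cases htc : t = c
            · exact hwall ⟨T, σ, hT, htc ▸ h0⟩
            · refine hnotcrit t ?_ htc hcrit
              rw [abs_sub_le_iff]  -- |t - c| ≤ η ↔ t - c ≤ η ∧ c - t ≤ η
              constructor <;> linarith
      rw [hstepC, ← hstepA, hstepB]
    · exact ih lo hi hle hlo hhi
        (by rw [Finset.not_nonempty_iff_eq_empty.mp hne]; simp)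


/-! ### insertion -/

lemma succAbove_val (q : Fin (m+1)) (i : Fin m) :
    ((q.succAbove i : Fin (m+1)) : ℕ) = if (i : ℕ) < (q : ℕ) then (i : ℕ) else (i : ℕ) + 1 := by
  rcases lt_or_ge ((i : ℕ)) ((q : ℕ)) with h | h
  · rw [if_pos h, Fin.succAbove_of_castSucc_lt q i (by simp [Fin.lt_def, h]), Fin.coe_castSucc]
  · rw [if_neg (by omega), Fin.succAbove_of_le_castSucc q i (by simp [Fin.le_def, h]),
      Fin.val_succ]

noncomputable def mkPerm (q : Fin (m+1)) (ρ : Equiv.Perm (Fin m)) : Equiv.Perm (Fin (m+1)) :=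
  (finSuccEquiv' q).trans ((ρ.optionCongr).trans (finSuccEquiv' (Fin.last m)).symm)

lemma mkPerm_q (q : Fin (m+1)) (ρ : Equiv.Perm (Fin m)) : mkPerm q ρ q = Fin.last m := by
  unfold mkPerm
  simp only [Equiv.trans_apply, finSuccEquiv'_at, Equiv.optionCongr_apply, Option.map_none,
    finSuccEquiv'_symm_none]

lemma mkPerm_succAbove (q : Fin (m+1)) (ρ : Equiv.Perm (Fin m)) (i : Fin m) :
    mkPerm q ρ (q.succAbove i) = (ρ i).castSucc := by
  unfold mkPerm
  simp only [Equiv.trans_apply, finSuccEquiv'_succAbove, Equiv.optionCongr_apply,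
    Option.map_some, finSuccEquiv'_symm_some, Fin.succAbove_last]

noncomputable def FF (x : (Fin (m+1) × ℤˣ) × SP m) : SP (m+1) :=
  (mkPerm x.1.1 x.2.1, fun k => (finSuccEquiv' x.1.1 k).elim x.1.2 x.2.2)

noncomputable def GG (p : SP (m+1)) : (Fin (m+1) × ℤˣ) × SP m :=
  ((p.1.symm (Fin.last m), p.2 (p.1.symm (Fin.last m))),
   (Equiv.removeNone ((finSuccEquiv' (p.1.symm (Fin.last m))).symm.trans
      (p.1.trans (finSuccEquiv' (Fin.last m)))),
    fun i => p.2 ((p.1.symm (Fin.last m)).succAbove i)))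

lemma FF_sign_q (x : (Fin (m+1) × ℤˣ) × SP m) : (FF x).2 x.1.1 = x.1.2 := by
  show (finSuccEquiv' x.1.1 x.1.1).elim x.1.2 x.2.2 = x.1.2
  rw [finSuccEquiv'_at]
  rfl

lemma FF_sign_succAbove (x : (Fin (m+1) × ℤˣ) × SP m) (i : Fin m) :
    (FF x).2 (x.1.1.succAbove i) = x.2.2 i := by
  show (finSuccEquiv' x.1.1 (x.1.1.succAbove i)).elim x.1.2 x.2.2 = x.2.2 i
  rw [finSuccEquiv'_succAbove]
  rfl

lemma GG_FF (x : (Fin (m+1) × ℤˣ) × SP m) : GG (FF x) = x := by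
  obtain ⟨⟨q, s⟩, ρ, ε'⟩ := x
  have hq : (FF ((q, s), (ρ, ε'))).1.symm (Fin.last m) = q := by
    rw [Equiv.symm_apply_eq]
    exact (mkPerm_q q ρ).symm
  unfold GG
  rw [hq]
  refine Prod.ext (Prod.ext rfl ?_) (Prod.ext ?_ ?_)
  · show (FF ((q, s), (ρ, ε'))).2 q = s
    exact FF_sign_q _
  · -- removeNone of composite equals ρ
    refine Equiv.ext fun i => ?_
    set C := (finSuccEquiv' q).symm.trans ((FF ((q, s), (ρ, ε'))).1.trans
      (finSuccEquiv' (Fin.last m))) with hC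
    have hCi : C (some i) = some (ρ i) := by
      rw [hC]
      simp only [Equiv.trans_apply, finSuccEquiv'_symm_some]
      show finSuccEquiv' (Fin.last m) (mkPerm q ρ (q.succAbove i)) = some (ρ i)
      rw [mkPerm_succAbove, ← Fin.succAbove_last, finSuccEquiv'_succAbove]
    have := Equiv.removeNone_some C ⟨ρ i, hCi⟩
    rw [hCi] at this
    exact Option.some_injective _ this
  · funext i
    show (FF ((q, s), (ρ, ε'))).2 (q.succAbove i) = ε' i
    exact FF_sign_succAbove _ i

lemma FF_GG (p : SP (m+1)) : FF (GG p) = p := by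
  set q := p.1.symm (Fin.last m) with hqdef
  have hpq : p.1 q = Fin.last m := Equiv.apply_symm_apply _ _
  refine Prod.ext (Equiv.ext fun k => ?_) (funext fun k => ?_)
  · by_cases hk : k = q
    · subst hk
      show mkPerm q _ q = p.1 q
      rw [mkPerm_q, hpq]
    · obtain ⟨i, rfl⟩ := Fin.exists_succAbove_eq hk
      show mkPerm q _ (q.succAbove i) = p.1 (q.succAbove i)
      rw [mkPerm_succAbove]
      have hne : p.1 (q.succAbove i) ≠ Fin.last m := by
        intro h
        exact Fin.succAbove_ne q i (p.1.injective (h.trans hpq.symm))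
      set C := (finSuccEquiv' q).symm.trans (p.1.trans (finSuccEquiv' (Fin.last m))) with hC
      have hCi : C (some i) = some ((p.1 (q.succAbove i)).castPred hne) := by
        rw [hC]
        simp only [Equiv.trans_apply, finSuccEquiv'_symm_some]
        conv_lhs => rw [← Fin.castSucc_castPred (p.1 (q.succAbove i)) hne]
        rw [← Fin.succAbove_last, finSuccEquiv'_succAbove]
      have := Equiv.removeNone_some C ⟨_, hCi⟩
      rw [hCi] at this
      have h2 := Option.some_injective _ this.symm
      show Fin.castSucc (Equiv.removeNone C i) = _
      rw [← h2, Fin.castSucc_castPred]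
  · by_cases hk : k = q
    · subst hk
      show (finSuccEquiv' q q).elim (p.2 q) _ = p.2 q
      rw [finSuccEquiv'_at]
      rfl
    · obtain ⟨i, rfl⟩ := Fin.exists_succAbove_eq hk
      show (finSuccEquiv' q (q.succAbove i)).elim (p.2 q) (fun i => p.2 (q.succAbove i))
        = p.2 (q.succAbove i)
      rw [finSuccEquiv'_succAbove]
      rfl

noncomputable def E0 : SP (m+1) ≃ (Fin (m+1) × ℤˣ) × SP m where
  toFun := GG
  invFun := FF
  left_inv := FF_GG
  right_inv := GG_FF

lemma psum_FF_le (v : Fin (m+1) → ℝ) (δ : ℝ) (x : (Fin (m+1) × ℤˣ) × SP m) {k : ℕ}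
    (hk : k ≤ (x.1.1 : ℕ)) :
    psum (W v δ) (FF x) k = psum (v ∘ Fin.castSucc) x.2 k := by
  obtain ⟨⟨q, s⟩, ρ, ε'⟩ := x
  have hk' : k ≤ (q : ℕ) := hk
  have hqm : (q : ℕ) ≤ m := Fin.is_le q
  have himg : (univ.filter fun i : Fin (m+1) => (i : ℕ) < k)
      = (univ.filter fun i : Fin m => (i : ℕ) < k).image q.succAbove := by
    ext y
    simp only [Finset.mem_image, mem_filter, mem_univ, true_and]
    constructor
    · intro hy
      have hylast : y ≠ Fin.last m := by
        intro h
        rw [h] at hy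
        simp only [Fin.val_last] at hy
        omega
      refine ⟨y.castPred hylast, ?_, ?_⟩
      · simp only [Fin.coe_castPred]
        exact hy
      · rw [Fin.succAbove_of_castSucc_lt, Fin.castSucc_castPred]
        rw [Fin.castSucc_castPred]
        exact Fin.lt_def.mpr (by simp at hk ⊢; omega)
    · rintro ⟨i, hi, rfl⟩
      rw [succAbove_val]
      split <;> simp at hk ⊢ <;> omega
  unfold psum
  rw [himg, Finset.sum_image (fun a _ b _ h => Fin.succAbove_right_injective h)]
  refine Finset.sum_congr rfl fun i hi => ?_
  have h1 : (FF ((q,s),(ρ,ε'))).2 (q.succAbove i) = ε' i := FF_sign_succAbove _ i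
  have h2 : (FF ((q,s),(ρ,ε'))).1 (q.succAbove i) = (ρ i).castSucc := mkPerm_succAbove q ρ i
  rw [h1, h2, W, Function.update_of_ne (ne_of_lt (Fin.castSucc_lt_last _))]
  rfl

lemma psum_FF_gt (v : Fin (m+1) → ℝ) (δ : ℝ) (x : (Fin (m+1) × ℤˣ) × SP m) {k : ℕ}
    (hk : (x.1.1 : ℕ) < k) :
    psum (W v δ) (FF x) k
      = psum (v ∘ Fin.castSucc) x.2 (k - 1) + ((x.1.2 : ℤ) : ℝ) * δ := by
  obtain ⟨⟨q, s⟩, ρ, ε'⟩ := x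
  have hk' : (q : ℕ) < k := hk
  have h2 : (univ.filter fun i : Fin (m+1) => (i : ℕ) < k)
      = insert q ((univ.filter fun i : Fin m => (i : ℕ) < k - 1).image q.succAbove) := by
    ext y
    simp only [Finset.mem_insert, Finset.mem_image, mem_filter, mem_univ, true_and]
    constructor
    · intro hy
      by_cases hyq : y = q
      · exact Or.inl hyq
      · right
        obtain ⟨i, hi⟩ := Fin.exists_succAbove_eq hyq
        refine ⟨i, ?_, hi⟩
        have hv := succAbove_val q i
        rw [hi] at hv
        have hyqv : (y : ℕ) ≠ (q : ℕ) := fun h => hyq (Fin.ext h)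
        split at hv <;> omega
    · rintro (rfl | ⟨i, hi, rfl⟩)
      · exact hk'
      · rw [succAbove_val]
        split <;> omega
  have hnotmem : q ∉ (univ.filter fun i : Fin m => (i : ℕ) < k - 1).image q.succAbove := by
    intro hmem
    obtain ⟨i, -, hi⟩ := Finset.mem_image.mp hmem
    exact Fin.succAbove_ne q i hi
  unfold psum
  rw [h2, Finset.sum_insert hnotmem,
    Finset.sum_image (fun a _ b _ h => Fin.succAbove_right_injective h)]
  have hq1 : (FF ((q,s),(ρ,ε'))).2 q = s := FF_sign_q _
  have hq2 : (FF ((q,s),(ρ,ε'))).1 q = Fin.last m := mkPerm_q q ρ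
  rw [hq1, hq2, W, Function.update_self]
  have hrest : ∀ i ∈ (univ.filter fun i : Fin m => (i : ℕ) < k - 1),
      (((FF ((q,s),(ρ,ε'))).2 (q.succAbove i) : ℤ) : ℝ) *
          (Function.update v (Fin.last m) δ) ((FF ((q,s),(ρ,ε'))).1 (q.succAbove i))
        = ((ε' i : ℤ) : ℝ) * (v ∘ Fin.castSucc) (ρ i) := by
    intro i hi
    have ha : (FF ((q,s),(ρ,ε'))).2 (q.succAbove i) = ε' i := FF_sign_succAbove _ i
    have hbb : (FF ((q,s),(ρ,ε'))).1 (q.succAbove i) = (ρ i).castSucc := mkPerm_succAbove q ρ i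
    rw [ha, hbb, Function.update_of_ne (ne_of_lt (Fin.castSucc_lt_last _))]
    rfl
  rw [Finset.sum_congr rfl hrest]
  ring

lemma card_units_int : Fintype.card ℤˣ = 2 := rfl

lemma card_marked (m : ℕ) :
    Nat.card {qs : Fin (m+1) × ℤˣ // qs.1 = 0 → qs.2 = 1} = 2 * m + 1 := by
  classical
  rw [Nat.card_eq_fintype_card]
  have h2 : Fintype.card {qs : Fin (m+1) × ℤˣ // qs.1 = 0 → qs.2 = 1}
      = Fintype.card {qs : Fin (m+1) × ℤˣ // ¬ (qs = ((0 : Fin (m+1)), (-1 : ℤˣ)))} := by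
    refine Fintype.card_congr (Equiv.subtypeEquivRight (fun x => ?_))
    constructor
    · intro h hx
      rw [hx] at h
      exact absurd (h rfl) (by decide : ¬ ((-1 : ℤˣ) = (1 : ℤˣ)))
    · intro h hq
      rcases Int.units_eq_one_or x.2 with h1 | h1
      · exact h1
      · exact absurd (Prod.ext_iff.mpr ⟨hq, h1⟩) h
  rw [h2, Fintype.card_subtype_compl, Fintype.card_subtype_eq, Fintype.card_prod,
    Fintype.card_fin, card_units_int]
  omega

lemma NB_insert (v : Fin (m+1) → ℝ) {δ : ℝ} (hδ : 0 < δ)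
    (hsmall : ∀ (T : Finset (Fin (m+1))) (σ : Fin (m+1) → ℤˣ), T.Nonempty →
      Fin.last m ∉ T → δ < |gsum v T σ|) :
    NB (W v δ) = (2 * m + 1) * NB (v ∘ Fin.castSucc) := by
  classical
  have habs_s : ∀ s : ℤˣ, |((s : ℤ) : ℝ) * δ| = δ := by
    intro s
    rw [abs_mul]
    rcases Int.units_eq_one_or s with h | h <;> rw [h] <;> simp [abs_of_pos hδ]
  have hbig : ∀ (y : SP m) (j : ℕ), 1 ≤ j → j ≤ m →
      δ < |psum (v ∘ Fin.castSucc) y j| := by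
    intro y j h1 h2
    rw [psum_repr]
    set T : Finset (Fin (m+1)) := (pT y j).image Fin.castSucc with hT
    set σ : Fin (m+1) → ℤˣ := fun x => if h : x = Fin.last m then 1 else pσ y (x.castPred h)
      with hσ
    have hEq : gsum (v ∘ Fin.castSucc) (pT y j) (pσ y) = gsum v T σ := by
      rw [gsum, gsum, hT, Finset.sum_image (fun a _ b _ h => Fin.castSucc_injective m h)]
      refine Finset.sum_congr rfl fun i _ => ?_
      have hne : Fin.castSucc i ≠ Fin.last m := ne_of_lt (Fin.castSucc_lt_last i)
      have hσv : σ i.castSucc = pσ y i := by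
        show (if h : i.castSucc = Fin.last m then 1 else pσ y (i.castSucc.castPred h)) = pσ y i
        rw [dif_neg hne, Fin.castPred_castSucc]
      rw [hσv]
      rfl
    rw [hEq]
    refine hsmall T σ ?_ ?_
    · obtain ⟨z, hz⟩ := pT_nonempty y h1 h2
      exact ⟨_, Finset.mem_image_of_mem _ hz⟩
    · intro hmem
      obtain ⟨z, -, hz⟩ := Finset.mem_image.mp hmem
      exact absurd hz (ne_of_lt (Fin.castSucc_lt_last z))
  have hiff : ∀ x : (Fin (m+1) × ℤˣ) × SP m,
      SignedPermBallot (W v δ) (FF x) ↔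
        ((x.1.1 = 0 → x.1.2 = 1) ∧ SignedPermBallot (v ∘ Fin.castSucc) x.2) := by
    intro x
    have hqm : (x.1.1 : ℕ) ≤ m := Fin.is_le x.1.1
    rw [ballot_iff, ballot_iff]
    constructor
    · intro hb
      constructor
      · intro hq0
        have hq0' : (x.1.1 : ℕ) = 0 := by rw [hq0]; rfl
        have h1 := hb 1 le_rfl (by omega)
        rw [psum_FF_gt v δ x (by omega)] at h1
        simp only [Nat.sub_self, psum_zero, zero_add] at h1
        rcases Int.units_eq_one_or x.1.2 with h | h
        · exact h
        · rw [h] at h1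
          push_cast at h1
          linarith
      · intro j h1 h2
        by_cases hjq : j ≤ (x.1.1 : ℕ)
        · have := hb j h1 (by omega)
          rwa [psum_FF_le v δ x hjq] at this
        · have := hb (j+1) (by omega) (by omega)
          rw [psum_FF_gt v δ x (by omega), Nat.add_sub_cancel] at this
          have hb' := hbig x.2 j h1 h2
          refine (pos_iff_near (x := psum (v ∘ Fin.castSucc) x.2 j + ((x.1.2 : ℤ) : ℝ) * δ)
            (y := psum (v ∘ Fin.castSucc) x.2 j) ?_).mp this
          rw [add_sub_cancel_left, habs_s]
          exact hb'
    · rintro ⟨hq0s, hby⟩ k h1 h2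
      by_cases hkq : k ≤ (x.1.1 : ℕ)
      · rw [psum_FF_le v δ x hkq]
        exact hby k h1 (by omega)
      · rw [psum_FF_gt v δ x (by omega)]
        by_cases hk1 : k = 1 ∧ (x.1.1 : ℕ) = 0
        · have hq0 : x.1.1 = 0 := Fin.ext (by rw [hk1.2]; rfl)
          rw [hq0s hq0, hk1.1]
          simp only [Nat.sub_self, psum_zero, zero_add]
          push_cast
          linarith
        · have hk1' : 2 ≤ k ∨ ((x.1.1 : ℕ) ≥ 1 ∧ k ≥ 1) := by omega
          have hkm : 1 ≤ k - 1 := by omega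
          have h := hby (k-1) hkm (by omega)
          have hb' := hbig x.2 (k-1) hkm (by omega)
          rw [abs_of_pos h] at hb'
          have : |((x.1.2 : ℤ) : ℝ) * δ| = δ := habs_s _
          have h3 : -δ ≤ ((x.1.2 : ℤ) : ℝ) * δ := by
            rcases abs_le.mp (le_of_eq this) with ⟨hl, -⟩
            exact hl
          linarith
  unfold NB
  have e1 : {p : SP (m+1) // SignedPermBallot (W v δ) p} ≃
      {x : (Fin (m+1) × ℤˣ) × SP m //
        (x.1.1 = 0 → x.1.2 = 1) ∧ SignedPermBallot (v ∘ Fin.castSucc) x.2} := by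
    refine Equiv.subtypeEquiv E0 (fun p => ?_)
    have hp : p = FF (E0 p) := (FF_GG p).symm
    calc SignedPermBallot (W v δ) p ↔ SignedPermBallot (W v δ) (FF (E0 p)) := by rw [← hp]
      _ ↔ _ := hiff (E0 p)
  rw [Nat.card_congr e1, Nat.card_congr (Equiv.subtypeProdEquivProd
    (p := fun qs : Fin (m+1) × ℤˣ => qs.1 = 0 → qs.2 = 1)
    (q := fun y : SP m => SignedPermBallot (v ∘ Fin.castSucc) y)), Nat.card_prod,
    card_marked]

/-! ### main induction -/

lemma Generic.restrict {v : Fin (m+1) → ℝ} (hg : Generic v) :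
    Generic (v ∘ Fin.castSucc) := by
  intro e' hsum i
  classical
  set e : Fin (m+1) → ℤ := fun j => if h : j = Fin.last m then 0 else e' (j.castPred h) with he
  have hsum' : ∑ j, (e j : ℝ) * v j = 0 := by
    rw [Fin.sum_univ_castSucc (f := fun j => (e j : ℝ) * v j)]
    have h1 : ∀ i : Fin m, (e (Fin.castSucc i) : ℝ) * v (Fin.castSucc i)
        = (e' i : ℝ) * (v ∘ Fin.castSucc) i := by
      intro i
      have hne : Fin.castSucc i ≠ Fin.last m := ne_of_lt (Fin.castSucc_lt_last i)
      have hev : e i.castSucc = e' i := by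
        show (if h : i.castSucc = Fin.last m then 0 else e' (i.castSucc.castPred h)) = e' i
        rw [dif_neg hne, Fin.castPred_castSucc]
      rw [hev]
      rfl
    rw [Finset.sum_congr rfl (fun i _ => h1 i)]
    have h2 : e (Fin.last m) = 0 := by
      show (if h : Fin.last m = Fin.last m then 0 else e' ((Fin.last m).castPred h)) = 0
      rw [dif_pos rfl]
    rw [h2, hsum]
    push_cast
    ring
  have h3 := hg e hsum' (Fin.castSucc i)
  have hne : Fin.castSucc i ≠ Fin.last m := ne_of_lt (Fin.castSucc_lt_last i)
  have hev : e i.castSucc = e' i := by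
    show (if h : i.castSucc = Fin.last m then 0 else e' (i.castSucc.castPred h)) = e' i
    rw [dif_neg hne, Fin.castPred_castSucc]
  rw [hev] at h3
  exact h3

lemma NB_zero (v : Fin 0 → ℝ) : NB v = 1 := by
  unfold NB
  have hall : ∀ p : SP 0, SignedPermBallot v p := by
    intro p
    unfold SignedPermBallot
    intro k h1 h2
    omega
  rw [Nat.card_congr (Equiv.subtypeUnivEquiv hall)]
  rw [Nat.card_eq_fintype_card]
  simp

lemma NB_eq_doubleFactorial : ∀ (N : ℕ) (v : Fin N → ℝ), Generic v →
    NB v = Nat.doubleFactorial (2 * N - 1) := by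
  intro N
  induction N with
  | zero =>
    intro v _
    rw [NB_zero]
    rfl
  | succ m ih =>
    intro v hg
    classical
    set P := (crit v).filter (fun y => 0 < y) with hP
    set δ : ℝ := if h : P.Nonempty then P.min' h / 2 else 1 with hδdef
    have hδpos : 0 < δ := by
      rw [hδdef]
      split
      · rename_i h
        have h1 := Finset.min'_mem P h
        have h2 := (Finset.mem_filter.mp h1).2
        linarith
      · norm_num
    have hδmin : ∀ y ∈ P, δ < y := by
      intro y hy
      rw [hδdef, dif_pos ⟨y, hy⟩]
      have h1 := Finset.min'_le P y hy
      have h2 := (Finset.mem_filter.mp (Finset.min'_mem P ⟨y, hy⟩)).2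
      linarith
    have hδnc : δ ∉ crit v := by
      intro hmem
      exact absurd (hδmin δ (Finset.mem_filter.mpr ⟨hmem, hδpos⟩)) (lt_irrefl δ)
    have hvnc : v (Fin.last m) ∉ crit v := by
      intro hmem
      obtain ⟨⟨T, σ⟩, -, hval⟩ := Finset.mem_image.mp hmem
      dsimp only at hval
      set e : Fin (m+1) → ℤ := fun j => if j = Fin.last m then (σ (Fin.last m) : ℤ)
        else (if j ∈ T.erase (Fin.last m) then (σ j : ℤ) else 0) with he
      have hA : ∑ i : Fin m, (e (Fin.castSucc i) : ℝ) * v (Fin.castSucc i) = gA v T σ := by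
        rw [← sum_ite_gA v T σ,
          Fin.sum_univ_castSucc
            (f := fun j => (((if j ∈ T.erase (Fin.last m) then (σ j : ℤ) else 0 : ℤ)) : ℝ) * v j)]
        rw [if_neg (Finset.notMem_erase _ _)]
        push_cast
        rw [zero_mul, add_zero]
        refine Finset.sum_congr rfl fun i _ => ?_
        have hne : Fin.castSucc i ≠ Fin.last m := ne_of_lt (Fin.castSucc_lt_last i)
        have hev : e i.castSucc
            = (if i.castSucc ∈ T.erase (Fin.last m) then (σ i.castSucc : ℤ) else 0) := by
          show (if i.castSucc = Fin.last m then ((σ (Fin.last m) : ℤ)) else _) = _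
          rw [if_neg hne]
        rw [hev]
        split_ifs <;> simp
      have hsum : ∑ j, (e j : ℝ) * v j = 0 := by
        rw [Fin.sum_univ_castSucc (f := fun j => (e j : ℝ) * v j), hA]
        have hlast : e (Fin.last m) = (σ (Fin.last m) : ℤ) := by
          show (if Fin.last m = Fin.last m then ((σ (Fin.last m) : ℤ)) else _) = _
          rw [if_pos rfl]
        rw [hlast, ← hval]
        have hsq := unit_sq (σ (Fin.last m))
        linear_combination (-(gA v T σ)) * hsq
      have := hg e hsum (Fin.last m)
      rw [he] at this
      simp only [if_pos rfl] at this
      exact (σ (Fin.last m)).ne_zero this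
    have hWv : W v (v (Fin.last m)) = v := Function.update_eq_self _ v
    have hseg : NB v = NB (W v δ) := by
      rcases le_total (v (Fin.last m)) δ with hor | hor
      · have := NB_seg v hg _ (v (Fin.last m)) δ hor hvnc hδnc le_rfl
        rwa [hWv] at this
      · have := NB_seg v hg _ δ (v (Fin.last m)) hor hδnc hvnc le_rfl
        rw [hWv] at this
        exact this.symm
    have hsmall : ∀ (T : Finset (Fin (m+1))) (σ : Fin (m+1) → ℤˣ), T.Nonempty →
        Fin.last m ∉ T → δ < |gsum v T σ| := by
      intro T σ hT hl
      have hnz : gsum v T σ ≠ 0 := hg.gsum_ne_zero hT σ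
      have hgval : ∀ u : ℤˣ, gA v T (Function.update σ (Fin.last m) u) = gsum v T σ := by
        intro u
        rw [gA, Finset.erase_eq_of_notMem hl]
        refine Finset.sum_congr rfl fun j hj => ?_
        rw [Function.update_of_ne (by rintro rfl; exact hl hj)]
      have hmem : |gsum v T σ| ∈ P := by
        refine Finset.mem_filter.mpr ⟨?_, abs_pos.mpr hnz⟩
        rcases le_or_gt 0 (gsum v T σ) with hge | hlt
        · refine Finset.mem_image.mpr ⟨(T, Function.update σ (Fin.last m) (-1)), Finset.mem_univ _, ?_⟩
          dsimp only
          rw [Function.update_self, hgval]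
          rw [abs_of_nonneg hge]
          push_cast
          ring
        · refine Finset.mem_image.mpr ⟨(T, Function.update σ (Fin.last m) 1), Finset.mem_univ _, ?_⟩
          dsimp only
          rw [Function.update_self, hgval]
          rw [abs_of_neg hlt]
          push_cast
          ring
      exact hδmin _ hmem
    have hins := NB_insert v hδpos hsmall
    have hrec := ih (v ∘ Fin.castSucc) hg.restrict
    rw [hseg, hins, hrec]
    cases m with
    | zero => rfl
    | succ m' =>
      have h1 : 2 * (m' + 1 + 1) - 1 = (2 * (m' + 1) - 1) + 2 := by omega
      have h2 : 2 * (m' + 1) - 1 + 2 = 2 * (m' + 1) + 1 := by omega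
      rw [h1, Nat.doubleFactorial_add_two, h2]

end BallotAux

/-- For a generic (ℚ-linearly independent) family of `n` reals, the number `b` of signed
permutations with the ballot property satisfies `2^n * b = n! * (2n choose n)`,
i.e. `b = (2n)! / (2^n * n!)`. -/
theorem card_ballot_signed_perms_eq
    (n : ℕ) (hn : 1 ≤ n) (a : Fin n → ℝ) (ha : LinearIndependent ℚ a) :
    2 ^ n * Nat.card {p : Equiv.Perm (Fin n) × (Fin n → ℤˣ) // SignedPermBallot a p} =
      Nat.factorial n * Nat.choose (2 * n) n := by
  have hgen : BallotAux.Generic a := by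
    intro e hsum j
    have hq : ∑ i ∈ Finset.univ, ((e i : ℚ)) • a i = 0 := by
      rw [← hsum]
      refine Finset.sum_congr rfl fun i _ => ?_
      rw [Rat.smul_def]
      push_cast
      ring
    have hli := linearIndependent_iff'.mp ha Finset.univ (fun i => ((e i : ℚ))) hq j
      (Finset.mem_univ j)
    have hli' : ((e j : ℚ)) = 0 := hli
    exact_mod_cast hli'
  have hmain := BallotAux.NB_eq_doubleFactorial n a hgen
  show 2 ^ n * BallotAux.NB a = _
  rw [hmain]
  have h1 : (2 * n).doubleFactorial = 2 ^ n * n.factorial := Nat.doubleFactorial_two_mul n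
  have h2 : (2 * n).factorial = (2 * n).doubleFactorial * (2 * n - 1).doubleFactorial := by
    obtain ⟨k, hk⟩ : ∃ k, 2 * n = k + 1 := ⟨2 * n - 1, by omega⟩
    rw [hk, show k + 1 - 1 = k by omega, Nat.factorial_eq_mul_doubleFactorial]
  have h3 := Nat.choose_mul_factorial_mul_factorial (show n ≤ 2 * n by omega)
  have hfac : 0 < n.factorial := Nat.factorial_pos n
  apply Nat.eq_of_mul_eq_mul_right hfac
  calc 2 ^ n * (2 * n - 1).doubleFactorial * n.factorial
      = (2 ^ n * n.factorial) * (2 * n - 1).doubleFactorial := by ring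
    _ = (2 * n).doubleFactorial * (2 * n - 1).doubleFactorial := by rw [h1]
    _ = (2 * n).factorial := h2.symm
    _ = (2 * n).choose n * n.factorial * (2 * n - n).factorial := h3.symm
    _ = n.factorial * (2 * n).choose n * n.factorial := by
        rw [show 2 * n - n = n by omega]
        ring
end

section
/- For every n ≥ 1, the number of sequences (s_1,…,s_{2n−1}) ∈ {−1,+1}^{2n−1} such that ∑_{i=1}^k s_i ≥ 0 for all 1 ≤ k ≤ 2n−1 equals (2n−1 choose n), i.e., equals (1/2)·(2n choose n). -/
open Finset

namespace BallotAux

/-- partial sum of first `k` entries -/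
def pm {m : ℕ} (s : Fin m → ℤˣ) (k : ℕ) : ℤ :=
  ∑ i ∈ univ.filter (fun i : Fin m => (i : ℕ) < k), (s i : ℤ)

/-- number of `-1` entries -/
def D {m : ℕ} (s : Fin m → ℤˣ) : ℕ := (univ.filter (fun i => s i = -1)).card

def Ok {m : ℕ} (s : Fin m → ℤˣ) : Prop := ∀ k ∈ Finset.range (m + 1), 0 ≤ pm s k

instance {m : ℕ} : DecidablePred (Ok (m := m)) := fun _ => by
  unfold Ok; infer_instance

def T (m j : ℕ) : Finset (Fin m → ℤˣ) := univ.filter (fun s => Ok s ∧ D s = j)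

lemma pm_eq_sum_ite {m : ℕ} (s : Fin m → ℤˣ) (k : ℕ) :
    pm s k = ∑ i : Fin m, if (i : ℕ) < k then (s i : ℤ) else 0 := by
  rw [pm, Finset.sum_filter]

lemma pm_snoc {m : ℕ} (t : Fin m → ℤˣ) (x : ℤˣ) (k : ℕ) :
    pm (Fin.snoc t x) k = pm t k + if m < k then (x : ℤ) else 0 := by
  rw [pm_eq_sum_ite, pm_eq_sum_ite, Fin.sum_univ_castSucc]
  simp [Fin.snoc_castSucc, Fin.snoc_last]

lemma D_snoc {m : ℕ} (t : Fin m → ℤˣ) (x : ℤˣ) :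
    D (Fin.snoc t x) = D t + if x = -1 then 1 else 0 := by
  rw [D, D, Finset.card_filter, Finset.card_filter, Fin.sum_univ_castSucc]
  simp [Fin.snoc_castSucc, Fin.snoc_last]

lemma pm_of_le {m k : ℕ} (hk : m ≤ k) (t : Fin m → ℤˣ) :
    pm t k = (m : ℤ) - 2 * (D t : ℤ) := by
  have h2 : ∀ i : Fin m, (t i : ℤ) = 1 - 2 * (if t i = -1 then 1 else 0) := by
    intro i; rcases Int.units_eq_one_or (t i) with h | h <;> simp [h]
  rw [pm_eq_sum_ite]
  have h3 : ∀ i : Fin m, (if (i : ℕ) < k then (t i : ℤ) else 0) = (t i : ℤ) := by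
    intro i; rw [if_pos (lt_of_lt_of_le i.isLt hk)]
  rw [Finset.sum_congr rfl (fun i _ => (h3 i).trans (h2 i)), Finset.sum_sub_distrib,
    Finset.sum_const, ← Finset.mul_sum, D, Finset.card_filter]
  push_cast
  simp [mul_comm]

lemma Ok_snoc {m : ℕ} (t : Fin m → ℤˣ) (x : ℤˣ) :
    Ok (Fin.snoc t x) ↔ Ok t ∧ 0 ≤ (m : ℤ) - 2 * (D t : ℤ) + (x : ℤ) := by
  constructor
  · intro h
    refine ⟨fun k hk => ?_, ?_⟩
    · have := h k (by simp at hk ⊢; omega)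
      rwa [pm_snoc, if_neg (by simp at hk; omega), add_zero] at this
    · have := h (m + 1) (by simp)
      rwa [pm_snoc, if_pos (by omega), pm_of_le (by omega)] at this
  · rintro ⟨h1, h2⟩ k hk
    rw [pm_snoc]
    rcases le_or_gt k m with h | h
    · rw [if_neg (by omega), add_zero]; exact h1 k (by simp; omega)
    · rw [if_pos h, pm_of_le (by omega)]; exact h2

lemma total_nonneg {m j : ℕ} {s : Fin m → ℤˣ} (hs : s ∈ T m j) : 2 * j ≤ m := by
  simp only [T, mem_filter, mem_univ, true_and] at hs
  have := hs.1 m (by simp)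
  rw [pm_of_le le_rfl, hs.2] at this
  omega

lemma snoc_injective {m : ℕ} (x : ℤˣ) :
    Function.Injective (fun t : Fin m → ℤˣ => Fin.snoc t x : _ → Fin (m+1) → ℤˣ) := by
  intro a b h
  have := congrArg Fin.init h
  simpa [Fin.init_snoc] using this

lemma filter_last_one (m j : ℕ) :
    (T (m+1) j).filter (fun s => s (Fin.last m) = 1) =
      (T m j).image (fun t => Fin.snoc t 1) := by
  ext s
  simp only [mem_filter, mem_image, T, mem_univ, true_and]
  constructor
  · rintro ⟨⟨hok, hD⟩, hlast⟩
    refine ⟨Fin.init s, ⟨?_, ?_⟩, ?_⟩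
    · have : s = Fin.snoc (Fin.init s) (1 : ℤˣ) := by
        rw [← hlast, Fin.snoc_init_self]
      rw [this] at hok
      exact ((Ok_snoc _ _).1 hok).1
    · have : s = Fin.snoc (Fin.init s) (1 : ℤˣ) := by
        rw [← hlast, Fin.snoc_init_self]
      rw [this, D_snoc] at hD
      simpa using hD
    · rw [← hlast, Fin.snoc_init_self]
  · rintro ⟨t, ⟨⟨hok, hD⟩, rfl⟩⟩
    have htot : 0 ≤ (m : ℤ) - 2 * (D t : ℤ) := by
      have := hok m (by simp)
      rwa [pm_of_le le_rfl] at this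
    refine ⟨⟨(Ok_snoc t 1).2 ⟨hok, by push_cast; omega⟩, ?_⟩, Fin.snoc_last _ _⟩
    rw [D_snoc]; simpa using hD

lemma filter_last_neg (m j : ℕ) (hj : 1 ≤ j) (hjm : 2 * j ≤ m + 1) :
    (T (m+1) j).filter (fun s => s (Fin.last m) = -1) =
      (T m (j-1)).image (fun t => Fin.snoc t (-1)) := by
  ext s
  simp only [mem_filter, mem_image, T, mem_univ, true_and]
  constructor
  · rintro ⟨⟨hok, hD⟩, hlast⟩
    have hs : s = Fin.snoc (Fin.init s) (-1 : ℤˣ) := by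
      rw [← hlast, Fin.snoc_init_self]
    refine ⟨Fin.init s, ⟨?_, ?_⟩, hs.symm⟩
    · rw [hs] at hok
      exact ((Ok_snoc _ _).1 hok).1
    · rw [hs, D_snoc] at hD
      simp at hD
      omega
  · rintro ⟨t, ⟨⟨hok, hD⟩, rfl⟩⟩
    refine ⟨⟨(Ok_snoc t (-1)).2 ⟨hok, ?_⟩, ?_⟩, Fin.snoc_last _ _⟩
    · rw [hD]; push_cast; omega
    · rw [D_snoc]; simp [hD]; omega

lemma filter_last_neg_empty (m j : ℕ) (h : ¬(1 ≤ j ∧ 2 * j ≤ m + 1)) :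
    (T (m+1) j).filter (fun s => s (Fin.last m) = -1) = ∅ := by
  rw [Finset.eq_empty_iff_forall_notMem]
  intro s hs
  simp only [mem_filter, T, mem_univ, true_and] at hs
  obtain ⟨⟨hok, hD⟩, hlast⟩ := hs
  rcases Nat.lt_or_ge j 1 with hj | hj
  · -- j = 0 but last = -1 so D ≥ 1
    have : (Fin.last m) ∈ univ.filter (fun i => s i = -1) := by simp [hlast]
    have := Finset.card_pos.2 ⟨_, this⟩
    rw [D] at hD; omega
  · have h2 : m + 2 ≤ 2 * j := by omega
    have := total_nonneg (m := m+1) (j := j)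
      (Finset.mem_filter.2 ⟨Finset.mem_univ _, hok, hD⟩)
    omega

lemma card_T_succ (m j : ℕ) :
    (T (m+1) j).card = (T m j).card +
      (if 1 ≤ j ∧ 2 * j ≤ m + 1 then (T m (j-1)).card else 0) := by
  classical
  have hsplit := Finset.card_filter_add_card_filter_not
    (s := T (m+1) j) (p := fun s => s (Fin.last m) = 1)
  have hneg : (T (m+1) j).filter (fun s => ¬ s (Fin.last m) = 1) =
      (T (m+1) j).filter (fun s => s (Fin.last m) = -1) := by
    apply Finset.filter_congr
    intro s _
    rcases Int.units_eq_one_or (s (Fin.last m)) with h | h <;> simp [h]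
  rw [hneg] at hsplit
  rw [← hsplit, filter_last_one, Finset.card_image_of_injective _ (snoc_injective 1)]
  congr 1
  by_cases h : 1 ≤ j ∧ 2 * j ≤ m + 1
  · rw [if_pos h, filter_last_neg m j h.1 h.2,
      Finset.card_image_of_injective _ (snoc_injective (-1))]
  · rw [if_neg h, filter_last_neg_empty m j h, Finset.card_empty]

/-- closed form -/
def c (m j : ℕ) : ℕ := m.choose j - (if j = 0 then 0 else m.choose (j-1))

lemma choose_mono_half {m a b : ℕ} (hab : a ≤ b) (hb : 2 * b ≤ m + 1) :
    m.choose a ≤ m.choose b := by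
  induction b with
  | zero => simpa [Nat.le_zero.1 hab]
  | succ N ih =>
    rcases Nat.lt_or_ge a (N+1) with h | h
    · have hle : m.choose a ≤ m.choose N := ih (by omega) (by omega)
      refine hle.trans ?_
      rcases Nat.lt_or_ge N (m / 2) with h2 | h2
      · exact Nat.choose_le_succ_of_lt_half_left h2
      · -- 2*(N+1) ≤ m+1 and N ≥ m/2 forces m odd, N = (m-1)/2, equality by symmetry
        have hm : m = 2 * N + 1 := by omega
        have : m.choose (m - N) = m.choose N := Nat.choose_symm (by omega)
        have hmn : m - N = N + 1 := by omega
        rw [hmn] at this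
        omega
    · have : a = N + 1 := by omega
      simp [this]

lemma c_zero (m : ℕ) : c m 0 = 1 := by simp [c]

lemma c_succ (m j : ℕ) :
    c (m+1) j = c m j + (if 1 ≤ j ∧ 2 * j ≤ m + 1 then c m (j-1) else 0) := by
  rcases Nat.eq_zero_or_pos j with rfl | hj
  · simp [c]
  by_cases h : 2 * j ≤ m + 1
  · rw [if_pos ⟨hj, h⟩]
    have hbd : m.choose (j-1) ≤ m.choose j := choose_mono_half (by omega) h
    rcases Nat.eq_or_lt_of_le hj with h1 | h1
    · -- j = 1
      have hj1 : j = 1 := h1.symm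
      subst hj1
      simp only [c]
      have hm : 1 ≤ m := by omega
      simp [Nat.choose_one_right]
      omega
    · -- j ≥ 2
      obtain ⟨i, rfl⟩ : ∃ i, j = i + 2 := ⟨j - 2, by omega⟩
      have hbd2 : m.choose i ≤ m.choose (i+1) := choose_mono_half (by omega) (by omega)
      have hbd' : m.choose (i+1) ≤ m.choose (i+2) := by
        have : i + 2 - 1 = i + 1 := by omega
        rwa [this] at hbd
      have hp1 : (m+1).choose (i+2) = m.choose (i+1) + m.choose (i+2) :=
        Nat.choose_succ_succ m (i+1)
      have hp2 : (m+1).choose (i+1) = m.choose i + m.choose (i+1) :=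
        Nat.choose_succ_succ m i
      have h21 : i + 2 - 1 = i + 1 := rfl
      simp only [c, h21, Nat.add_sub_cancel, if_neg (by omega : ¬ i + 2 = 0),
        if_neg (by omega : ¬ i + 1 = 0), hp1, hp2]
      omega
  · rw [if_neg (by omega)]
    -- both sides are 0
    have z1 : (m+1).choose j ≤ (m+1).choose (j-1) := by
      rcases Nat.lt_or_ge (m+1) j with hbig | hle
      · rw [Nat.choose_eq_zero_of_lt hbig]; exact Nat.zero_le _
      · have e1 : (m+1).choose j = (m+1).choose (m+1-j) := (Nat.choose_symm hle).symm
        have e2 : (m+1).choose (j-1) = (m+1).choose (m+1-(j-1)) :=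
          (Nat.choose_symm (by omega)).symm
        rw [e1, e2]
        exact choose_mono_half (by omega) (by omega)
    have z2 : m.choose j ≤ m.choose (j-1) := by
      rcases Nat.lt_or_ge m j with hbig | hle
      · rw [Nat.choose_eq_zero_of_lt hbig]; exact Nat.zero_le _
      · have e1 : m.choose j = m.choose (m-j) := (Nat.choose_symm hle).symm
        have e2 : m.choose (j-1) = m.choose (m-(j-1)) := (Nat.choose_symm (by omega)).symm
        rw [e1, e2]
        exact choose_mono_half (by omega) (by omega)
    simp only [c, if_neg (by omega : ¬ j = 0)]
    omega

lemma card_T_eq (m j : ℕ) : (T m j).card = c m j := by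
  induction m generalizing j with
  | zero =>
    rcases Nat.eq_zero_or_pos j with rfl | hj
    · rw [c_zero]
      have hpm0 : ∀ (s : Fin 0 → ℤˣ) (k : ℕ), pm s k = 0 := by
        intro s k; rw [pm_eq_sum_ite]; simp
      have : T 0 0 = univ := by
        ext s
        simp [T, Ok, D, hpm0]
      rw [this, Finset.card_univ]
      simp
    · have hT : T 0 j = ∅ := by
        rw [Finset.eq_empty_iff_forall_notMem]
        intro s hs
        have := total_nonneg hs
        omega
      have hc : c 0 j = 0 := by
        simp only [c, if_neg (by omega : ¬ j = 0)]
        rw [Nat.choose_eq_zero_of_lt (by omega), Nat.zero_sub]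
      rw [hT, hc, Finset.card_empty]
  | succ m ih =>
    rw [card_T_succ, c_succ, ih]
    by_cases h : 1 ≤ j ∧ 2 * j ≤ m + 1
    · rw [if_pos h, if_pos h, ih]
    · rw [if_neg h, if_neg h]

lemma sum_c (m N : ℕ) :
    ∑ j ∈ Finset.range (N+1), c m j = m.choose (min N (m/2)) := by
  induction N with
  | zero => simp [c_zero]
  | succ N ih =>
    rw [Finset.sum_range_succ, ih]
    rcases Nat.lt_or_ge N (m/2) with h | h
    · have hmin1 : min N (m/2) = N := by omega
      have hmin2 : min (N+1) (m/2) = N+1 := by omega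
      have hmono : m.choose N ≤ m.choose (N+1) := choose_mono_half (by omega) (by omega)
      simp only [c, if_neg (Nat.succ_ne_zero N), Nat.add_sub_cancel, hmin1, hmin2]
      omega
    · have hmin1 : min N (m/2) = m/2 := by omega
      have hmin2 : min (N+1) (m/2) = m/2 := by omega
      have hz : c m (N+1) = 0 := by
        simp only [c, if_neg (Nat.succ_ne_zero N), Nat.add_sub_cancel]
        have : m.choose (N+1) ≤ m.choose N := by
          rcases Nat.lt_or_ge m (N+1) with hbig | hle
          · rw [Nat.choose_eq_zero_of_lt hbig]; exact Nat.zero_le _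
          · have e1 : m.choose (N+1) = m.choose (m-(N+1)) := (Nat.choose_symm hle).symm
            have e2 : m.choose N = m.choose (m-N) := (Nat.choose_symm (by omega)).symm
            rw [e1, e2]
            exact choose_mono_half (by omega) (by omega)
        omega
      rw [hz, hmin1, hmin2, add_zero]

lemma D_le {m : ℕ} (s : Fin m → ℤˣ) : D s ≤ m := by
  calc D s ≤ (univ : Finset (Fin m)).card := Finset.card_filter_le _ _
  _ = m := by simp

lemma card_Ok (m : ℕ) :
    (univ.filter (fun s : Fin m → ℤˣ => Ok s)).card = m.choose (m/2) := by
  rw [Finset.card_eq_sum_card_fiberwise (f := fun s => D s) (t := Finset.range (m+1))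
    (fun s _ => Finset.mem_range.2 (Nat.lt_succ_of_le (D_le s)))]
  have : ∀ j ∈ Finset.range (m+1),
      ((univ.filter (fun s : Fin m → ℤˣ => Ok s)).filter (fun s => D s = j)).card
        = c m j := by
    intro j _
    rw [← card_T_eq]
    congr 1
    rw [T, Finset.filter_filter]
  rw [Finset.sum_congr rfl this, sum_c]
  congr 1
  omega

end BallotAux

open BallotAux in
/-- The number of `±1`-sequences of length `2n - 1` all of whose partial sums are
non-negative is `(2n-1 choose n)`, i.e. half of `(2n choose n)`. -/
theorem card_nonneg_partial_sum_sign_sequences_odd (n : ℕ) (hn : 1 ≤ n) :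
    Nat.card {s : Fin (2 * n - 1) → ℤˣ //
        ∀ k : ℕ, 1 ≤ k → k ≤ 2 * n - 1 →
          0 ≤ ∑ i ∈ univ.filter (fun i : Fin (2 * n - 1) => (i : ℕ) < k), (s i : ℤ)} =
      Nat.choose (2 * n - 1) n := by
  have hiff : ∀ s : Fin (2 * n - 1) → ℤˣ,
      (∀ k : ℕ, 1 ≤ k → k ≤ 2 * n - 1 →
        0 ≤ ∑ i ∈ univ.filter (fun i : Fin (2 * n - 1) => (i : ℕ) < k), (s i : ℤ)) ↔ Ok s := by
    intro s
    constructor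
    · intro h k hk
      simp only [Finset.mem_range] at hk
      rcases Nat.eq_zero_or_pos k with rfl | hk1
      · rw [pm_eq_sum_ite]; simp
      · exact h k hk1 (by omega)
    · intro h k hk1 hk2
      exact h k (Finset.mem_range.2 (by omega))
  rw [Nat.card_congr (Equiv.subtypeEquivRight hiff), Nat.card_eq_fintype_card,
    Fintype.card_subtype, card_Ok]
  have h1 : (2 * n - 1) / 2 = n - 1 := by omega
  rw [h1]
  have : (2*n-1) - n = n - 1 := by omega
  rw [← this, Nat.choose_symm (by omega)]
end

section
/- Let n ≥ 1. An ordered partition (composition) of n is a finite sequence of positive integers summing to n; a composition u majorizes a composition v if ∑_{i=1}^k u_i ≥ ∑_{i=1}^k v_i for every k from 1 up to the length of the shorter of the two sequences. Then 2 times the number of ordered pairs (u, v) of compositions of n such that u majorizes v equals (2n choose n). Equivalently, if u and v are chosen independently and uniformly at random from the 2^{n−1} compositions of n, the probability that u majorizes v is (2n choose n)/2^{2n−1}. -/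
/-- A composition (ordered partition) of `n`: a finite sequence of positive integers
summing to `n`. -/
def IsComposition (n : ℕ) (u : List ℕ) : Prop :=
  (∀ x ∈ u, 0 < x) ∧ u.sum = n

/-- `u` majorizes `v` if every partial sum of `u` is at least the corresponding
partial sum of `v`, for indices up to the length of the shorter sequence. -/
def CompMajorizes (u v : List ℕ) : Prop :=
  ∀ k : ℕ, 1 ≤ k → k ≤ min u.length v.length → (v.take k).sum ≤ (u.take k).sum


def cntb (l : List Bool) (i : ℕ) : ℕ := (l.take i).count true


def cnt : ℕ → ℕ → ℕ
  | 0, _ => 1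
  | N+1, a => cnt N (a+1) + if a = 0 then 0 else cnt N (a-1)

def gcnt : ℕ → ℕ → ℕ
  | 0, _ => 1
  | m+1, d => gcnt m (d+1) + 2 * gcnt m d + if d = 0 then 0 else gcnt m (d-1)

lemma gcnt_eq_cnt (m : ℕ) : ∀ d, gcnt m d = cnt (2*m) (2*d+1) := by
  induction m with
  | zero => intro d; rfl
  | succ m ih =>
    intro d
    have h2 : 2 * (m+1) = (2*m + 1) + 1 := by ring
    rw [h2]
    show gcnt (m+1) d = cnt ((2*m+1)+1) (2*d+1)
    rw [show cnt ((2*m+1)+1) (2*d+1) = cnt (2*m+1) (2*d+2) + cnt (2*m+1) (2*d) from by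
      simp [cnt]]
    rw [show cnt (2*m+1) (2*d+2) = cnt (2*m) (2*d+3) + cnt (2*m) (2*d+1) from by
      simp [cnt]]
    rcases Nat.eq_zero_or_pos d with hd | hd
    · subst hd
      rw [show cnt (2*m+1) (2*0) = cnt (2*m) 1 from by simp [cnt]]
      simp only [gcnt, ih, if_pos rfl]
      norm_num
      ring_nf
    · rw [show cnt (2*m+1) (2*d) = cnt (2*m) (2*d+1) + cnt (2*m) (2*d-1) from by
        have h1 : ¬ (2*d = 0) := by omega
        simp only [cnt, h1, if_false]]
      have hdne : ¬ (d = 0) := by omega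
      simp only [gcnt, hdne, if_false, ih]
      rw [show 2*(d-1)+1 = 2*d-1 from by omega]
      ring

lemma cnt_big : ∀ N a, N ≤ a → cnt N a = 2^N := by
  intro N
  induction N with
  | zero => intro a _; rfl
  | succ N ih =>
    intro a ha
    have h1 : ¬ (a = 0) := by omega
    simp only [cnt, h1, if_false]
    rw [ih (a+1) (by omega), ih (a-1) (by omega)]
    ring

def S (N a : ℕ) : ℕ := ∑ j ∈ Finset.Icc ((N+1-a)/2) ((N+1-a)/2 + a), Nat.choose N j

lemma sum_Icc_zero_choose (N a : ℕ) (h : N ≤ a) :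
    ∑ j ∈ Finset.Icc 0 a, Nat.choose N j = 2^N := by
  rw [← Nat.sum_range_choose N]
  rw [show Finset.Icc 0 a = Finset.range (a+1) from by
    rw [← Nat.Ico_zero_eq_range, Finset.Ico_add_one_right_eq_Icc]]
  symm
  apply Finset.sum_subset
  · intro x hx; simp at hx ⊢; omega
  · intro x _ hx
    simp at hx
    exact Nat.choose_eq_zero_of_lt (by omega)

lemma sum_Icc_eq_sum_range' (f : ℕ → ℕ) (m k : ℕ) :
    ∑ j ∈ Finset.Icc m (m + k), f j = ∑ i ∈ Finset.range (k+1), f (m + i) := by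
  induction k with
  | zero => simp
  | succ k ih =>
    rw [show m + (k+1) = (m+k) + 1 from by omega, Finset.sum_Icc_succ_top (by omega),
      Finset.sum_range_succ, ih]
    congr 1

lemma cnt_eq_S : ∀ N a, cnt N a = S N a := by
  intro N
  induction N with
  | zero =>
    intro a
    show 1 = S 0 a
    unfold S
    rcases Nat.eq_zero_or_pos a with h | h
    · subst h; simp
    · have h1 : (0+1-a)/2 = 0 := by omega
      rw [h1, zero_add]
      rw [show Finset.Icc 0 a = Finset.Icc 0 (0 + a) from by norm_num]
      rw [sum_Icc_eq_sum_range']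
      rw [Finset.sum_eq_single 0]
      · simp
      · intro b _ hb
        exact Nat.choose_eq_zero_of_lt (by omega)
      · simp
  | succ N ih =>
    intro a
    by_cases hbig : N + 1 ≤ a
    · rw [cnt_big _ _ hbig]
      unfold S
      have h1 : (N+1+1-a)/2 = 0 := by omega
      rw [h1, zero_add]
      rw [sum_Icc_zero_choose _ _ (by omega)]
    · push_neg at hbig
      have haN : a ≤ N := by omega
      rcases Nat.eq_zero_or_pos a with h0 | hpos
      · subst h0
        show cnt N 1 + 0 = S (N+1) 0
        rw [ih 1]
        unfold S
        have e1 : (N+1-1)/2 = N/2 := by omega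
        have e2 : (N+1+1-0)/2 = N/2 + 1 := by omega
        rw [e1, e2]
        rw [sum_Icc_eq_sum_range', sum_Icc_eq_sum_range']
        simp [Finset.sum_range_succ]
        rw [Nat.choose_succ_succ N (N/2)]
      · have hane : ¬ (a = 0) := by omega
        rw [show cnt (N+1) a = cnt N (a+1) + cnt N (a-1) from by
          simp only [cnt, hane, if_false]]
        rw [ih (a+1), ih (a-1)]
        unfold S
        set q := (N - a)/2 with hq
        have e1 : (N+1-(a+1))/2 = q := by omega
        have e2 : (N+1-(a-1))/2 = q + 1 := by omega
        have e3 : (N+1+1-a)/2 = q + 1 := by omega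
        rw [e1, e2, e3]
        rw [sum_Icc_eq_sum_range', sum_Icc_eq_sum_range', sum_Icc_eq_sum_range']
        calc
          (∑ i ∈ Finset.range (a+1+1), Nat.choose N (q + i)) +
              ∑ i ∈ Finset.range (a-1+1), Nat.choose N (q+1+i)
            = ((∑ i ∈ Finset.range (a+1), Nat.choose N (q + i)) + Nat.choose N (q+(a+1))) +
              ∑ i ∈ Finset.range a, Nat.choose N (q+1+i) := by
                rw [Finset.sum_range_succ (fun i => Nat.choose N (q+i)) (a+1),
                  show a-1+1 = a from by omega]
          _ = (∑ i ∈ Finset.range (a+1), Nat.choose N (q + i)) +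
              ((∑ i ∈ Finset.range a, Nat.choose N (q+1+i)) + Nat.choose N (q+1+a)) := by
                rw [show q+(a+1) = q+1+a from by omega]; ring
          _ = (∑ i ∈ Finset.range (a+1), Nat.choose N (q + i)) +
              ∑ i ∈ Finset.range (a+1), Nat.choose N (q+1+i) := by
                rw [Finset.sum_range_succ (fun i => Nat.choose N (q+1+i)) a]
          _ = ∑ i ∈ Finset.range (a+1), Nat.choose (N+1) (q+1+i) := by
                rw [← Finset.sum_add_distrib]
                apply Finset.sum_congr rfl
                intro i _
                rw [show q+1+i = (q+i)+1 from by omega, Nat.choose_succ_succ]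

lemma final_arith (n : ℕ) (hn : 1 ≤ n) :
    2 * gcnt (n-1) 0 = Nat.choose (2*n) n := by
  obtain ⟨a, rfl⟩ : ∃ a, n = a + 1 := ⟨n-1, by omega⟩
  rw [show a + 1 - 1 = a from by omega]
  rw [gcnt_eq_cnt, cnt_eq_S]
  unfold S
  rw [show 2*0+1 = 1 from rfl]
  rw [show (2*a+1-1)/2 = a from by omega]
  rw [sum_Icc_eq_sum_range']
  rw [Finset.sum_range_succ, Finset.sum_range_succ, Finset.sum_range_zero]
  rw [show a + 0 = a from rfl]
  have h1 : Nat.choose (2*a) a + Nat.choose (2*a) (a+1) = Nat.choose (2*a+1) (a+1) :=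
    (Nat.choose_succ_succ (2*a) a).symm
  have h3 : Nat.choose (2*a+1) a = Nat.choose (2*a+1) (a+1) := by
    have := Nat.choose_symm (n := 2*a+1) (k := a+1) (by omega)
    rw [show 2*a+1-(a+1) = a from by omega] at this
    omega
  have h2 : Nat.choose (2*a+1) a + Nat.choose (2*a+1) (a+1) = Nat.choose (2*a+2) (a+1) :=
    (Nat.choose_succ_succ (2*a+1) a).symm
  rw [show 2*(a+1) = 2*a+2 from by ring]
  omega


lemma cntb_zero (l : List Bool) : cntb l 0 = 0 := rfl

lemma cntb_cons (b : Bool) (l : List Bool) (i : ℕ) :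
    cntb (b :: l) (i+1) = cntb l i + (if b then 1 else 0) := by
  cases b <;> simp [cntb, List.count_cons]

def emb (b1 b2 : Bool) : (List Bool × List Bool) ↪ (List Bool × List Bool) :=
  ⟨fun p => (b1 :: p.1, b2 :: p.2), by
    intro p q h
    simp only [Prod.mk.injEq, List.cons.injEq] at h
    exact Prod.ext h.1.2 h.2.2⟩

def DP : ℕ → ℕ → Finset (List Bool × List Bool)
  | 0, _ => {([], [])}
  | m+1, d =>
      ((DP m (d+1)).map (emb false true) ∪ (DP m d).map (emb false false)) ∪
      ((DP m d).map (emb true true) ∪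
        (if d = 0 then ∅ else (DP m (d-1)).map (emb true false)))

lemma DP_succ (m d : ℕ) : DP (m+1) d =
      ((DP m (d+1)).map (emb false true) ∪ (DP m d).map (emb false false)) ∪
      ((DP m d).map (emb true true) ∪
        (if d = 0 then ∅ else (DP m (d-1)).map (emb true false))) := rfl

lemma mem_emb_head {s : Finset (List Bool × List Bool)} {b1 b2 : Bool} {p}
    (h : p ∈ s.map (emb b1 b2)) : ∃ q ∈ s, p = (b1 :: q.1, b2 :: q.2) := by
  simp only [Finset.mem_map, emb, Function.Embedding.coeFn_mk] at h
  obtain ⟨q, hq, rfl⟩ := h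
  exact ⟨q, hq, rfl⟩

lemma DP_card (m : ℕ) : ∀ d, (DP m d).card = gcnt m d := by
  induction m with
  | zero => intro d; rfl
  | succ m ih =>
    intro d
    rw [DP_succ]
    have disj_heads : ∀ (s t : Finset (List Bool × List Bool)) (b1 b2 c1 c2 : Bool),
        (b1, b2) ≠ (c1, c2) → Disjoint (s.map (emb b1 b2)) (t.map (emb c1 c2)) := by
      intro s t b1 b2 c1 c2 hne
      rw [Finset.disjoint_left]
      intro p hp hp'
      obtain ⟨q, _, rfl⟩ := mem_emb_head hp
      obtain ⟨q', _, h⟩ := mem_emb_head hp'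
      simp only [Prod.mk.injEq, List.cons.injEq] at h
      exact hne (by simp [h.1.1, h.2.1])
    have hd1 : Disjoint ((DP m (d+1)).map (emb false true)) ((DP m d).map (emb false false)) :=
      disj_heads _ _ _ _ _ _ (by simp)
    have hd2 : Disjoint ((DP m d).map (emb true true))
        (if d = 0 then (∅ : Finset (List Bool × List Bool)) else (DP m (d-1)).map (emb true false)) := by
      split
      · simp
      · exact disj_heads _ _ _ _ _ _ (by simp)
    have hd3 : Disjoint ((DP m (d+1)).map (emb false true) ∪ (DP m d).map (emb false false))
        ((DP m d).map (emb true true) ∪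
          (if d = 0 then (∅:Finset (List Bool × List Bool)) else (DP m (d-1)).map (emb true false))) := by
      rw [Finset.disjoint_left]
      intro p hp hp'
      rw [Finset.mem_union] at hp hp'
      have h1 : p.1.head? = some false := by
        rcases hp with h | h <;> (obtain ⟨q, _, rfl⟩ := mem_emb_head h; rfl)
      have h2 : p.1.head? = some true := by
        rcases hp' with h | h
        · obtain ⟨q, _, rfl⟩ := mem_emb_head h; rfl
        · rcases Decidable.em (d = 0) with hd | hd
          · rw [if_pos hd] at h; simp at h
          · rw [if_neg hd] at h
            obtain ⟨q, _, rfl⟩ := mem_emb_head h; rfl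
      rw [h1] at h2; simp at h2
    rw [Finset.card_union_of_disjoint hd3, Finset.card_union_of_disjoint hd1,
      Finset.card_union_of_disjoint hd2]
    rw [Finset.card_map, Finset.card_map, Finset.card_map]
    show _ = gcnt (m+1) d
    rcases Decidable.em (d = 0) with hd | hd
    · subst hd
      simp [gcnt, ih]
      try ring_nf
    · rw [if_neg hd, Finset.card_map]
      simp only [gcnt, if_neg hd, ih]
      ring

lemma dom_cons {s t : List Bool} {d : ℕ} (b1 b2 : Bool)
    (h : ∀ i, cntb s i + (if b1 then 1 else 0) ≤ cntb t i + (if b2 then 1 else 0) + d) :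
    ∀ i, cntb (b1 :: s) i ≤ cntb (b2 :: t) i + d := by
  intro i
  cases i with
  | zero => simp [cntb_zero]
  | succ i =>
    rw [cntb_cons, cntb_cons]
    have := h i
    omega

lemma dom_cons' {s t : List Bool} {d : ℕ} {b1 b2 : Bool}
    (h : ∀ i, cntb (b1 :: s) i ≤ cntb (b2 :: t) i + d) :
    ∀ i, cntb s i + (if b1 then 1 else 0) ≤ cntb t i + (if b2 then 1 else 0) + d := by
  intro i
  have := h (i+1)
  rw [cntb_cons, cntb_cons] at this
  omega

lemma mem_DP (m : ℕ) : ∀ d p, p ∈ DP m d ↔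
    (p.1.length = m ∧ p.2.length = m ∧ ∀ i, cntb p.1 i ≤ cntb p.2 i + d) := by
  induction m with
  | zero =>
    intro d p
    show p ∈ ({([], [])} : Finset _) ↔ _
    simp only [Finset.mem_singleton]
    constructor
    · rintro rfl
      exact ⟨rfl, rfl, fun i => by simp [cntb]⟩
    · rintro ⟨h1, h2, _⟩
      rw [List.length_eq_zero_iff] at h1 h2
      exact Prod.ext h1 h2
  | succ m ih =>
    intro d p
    obtain ⟨p1, p2⟩ := p
    rw [DP_succ]
    simp only [Finset.mem_union]
    constructor
    · intro hp
      rcases hp with (h | h) | (h | h)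
      · obtain ⟨q, hq, heq⟩ := mem_emb_head h
        obtain ⟨hl1, hl2, hdom⟩ := (ih (d+1) q).1 hq
        rw [Prod.mk.injEq] at heq
        obtain ⟨h1, h2⟩ := heq
        subst h1; subst h2
        refine ⟨by simp [hl1], by simp [hl2], dom_cons false true (fun i => ?_)⟩
        have := hdom i; simp; omega
      · obtain ⟨q, hq, heq⟩ := mem_emb_head h
        obtain ⟨hl1, hl2, hdom⟩ := (ih d q).1 hq
        rw [Prod.mk.injEq] at heq
        obtain ⟨h1, h2⟩ := heq
        subst h1; subst h2
        refine ⟨by simp [hl1], by simp [hl2], dom_cons false false (fun i => ?_)⟩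
        have := hdom i; simp; omega
      · obtain ⟨q, hq, heq⟩ := mem_emb_head h
        obtain ⟨hl1, hl2, hdom⟩ := (ih d q).1 hq
        rw [Prod.mk.injEq] at heq
        obtain ⟨h1, h2⟩ := heq
        subst h1; subst h2
        refine ⟨by simp [hl1], by simp [hl2], dom_cons true true (fun i => ?_)⟩
        have := hdom i; simp; omega
      · rcases Decidable.em (d = 0) with hd | hd
        · rw [if_pos hd] at h; simp at h
        · rw [if_neg hd] at h
          obtain ⟨q, hq, heq⟩ := mem_emb_head h
          obtain ⟨hl1, hl2, hdom⟩ := (ih (d-1) q).1 hq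
          rw [Prod.mk.injEq] at heq
          obtain ⟨h1, h2⟩ := heq
          subst h1; subst h2
          refine ⟨by simp [hl1], by simp [hl2], dom_cons true false (fun i => ?_)⟩
          have := hdom i; simp; omega
    · rintro ⟨hl1, hl2, hdom⟩
      obtain ⟨b1, s, rfl⟩ : ∃ b1 s, p1 = b1 :: s := by
        cases p1 with
        | nil => simp at hl1
        | cons b s => exact ⟨b, s, rfl⟩
      obtain ⟨b2, t, rfl⟩ : ∃ b2 t, p2 = b2 :: t := by
        cases p2 with
        | nil => simp at hl2
        | cons b t => exact ⟨b, t, rfl⟩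
      have hls : s.length = m := by simpa using hl1
      have hlt : t.length = m := by simpa using hl2
      have htail := dom_cons' hdom
      have mem_map : ∀ (b1' b2' : Bool) (d' : ℕ), (s, t) ∈ DP m d' →
          (b1' :: s, b2' :: t) ∈ (DP m d').map (emb b1' b2') := by
        intro b1' b2' d' h
        rw [Finset.mem_map]
        exact ⟨(s, t), h, rfl⟩
      cases b1 <;> cases b2
      · -- false false : d' = d
        refine Or.inl (Or.inr (mem_map _ _ _ ((ih d (s,t)).2 ⟨hls, hlt, fun i => ?_⟩)))
        have := htail i; simp at this ⊢; omega
      · -- false true : d' = d+1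
        refine Or.inl (Or.inl (mem_map _ _ _ ((ih (d+1) (s,t)).2 ⟨hls, hlt, fun i => ?_⟩)))
        have := htail i; simp at this ⊢; omega
      · -- true false : needs d ≥ 1, d' = d - 1
        have hd : d ≠ 0 := by
          have := htail 0; simp [cntb_zero] at this; omega
        refine Or.inr (Or.inr ?_)
        rw [if_neg hd]
        refine mem_map _ _ _ ((ih (d-1) (s,t)).2 ⟨hls, hlt, fun i => ?_⟩)
        have := htail i; simp at this ⊢; omega
      · -- true true : d' = d
        refine Or.inr (Or.inl (mem_map _ _ _ ((ih d (s,t)).2 ⟨hls, hlt, fun i => ?_⟩)))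
        have := htail i; simp at this ⊢; omega


def phi : List ℕ → List Bool
  | [] => []
  | x :: r => List.replicate (x-1) false ++ true :: phi r

def psi : List Bool → List ℕ
  | [] => []
  | true :: w => 1 :: psi w
  | false :: w =>
    match psi w with
    | [] => [1]
    | x :: r => (x+1) :: r

lemma psi_ne_nil (w : List Bool) (hw : w ≠ []) : psi w ≠ [] := by
  match w with
  | true :: w => simp [psi]
  | false :: w =>
    show (match psi w with
    | [] => [1]
    | x :: r => (x+1) :: r) ≠ []
    cases psi w <;> simp

lemma psi_pos (w : List Bool) : ∀ x ∈ psi w, 0 < x := by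
  induction w with
  | nil => simp [psi]
  | cons b w ih =>
    cases b
    · show ∀ x ∈ (match psi w with
        | [] => [1]
        | x :: r => (x+1) :: r), 0 < x
      cases h : psi w with
      | nil => simp
      | cons y r =>
        simp only [List.mem_cons]
        rintro x (rfl | hx)
        · omega
        · exact ih x (by rw [h]; exact List.mem_cons_of_mem _ hx)
    · show ∀ x ∈ 1 :: psi w, 0 < x
      simp only [List.mem_cons]
      rintro x (rfl | hx)
      · omega
      · exact ih x hx

lemma psi_sum (w : List Bool) : (psi w).sum = w.length := by
  induction w with
  | nil => rfl
  | cons b w ih =>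
    cases b
    · show (match psi w with
        | [] => [1]
        | x :: r => (x+1) :: r).sum = w.length + 1
      cases h : psi w with
      | nil =>
        have : w = [] := by
          by_contra hne
          exact psi_ne_nil w hne h
        subst this
        simp
      | cons y r =>
        simp only [List.sum_cons]
        rw [h] at ih
        simp only [List.sum_cons] at ih
        omega
    · show (1 :: psi w).sum = w.length + 1
      simp only [List.sum_cons, ih]
      omega

lemma psi_rep (k : ℕ) (w : List Bool) :
    psi (List.replicate k false ++ true :: w) = (k+1) :: psi w := by
  induction k with
  | zero => simp [psi]
  | succ k ih =>
    rw [List.replicate_succ, List.cons_append]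
    show (match psi (List.replicate k false ++ true :: w) with
      | [] => [1]
      | x :: r => (x+1) :: r) = (k+1+1) :: psi w
    rw [ih]

lemma psi_phi (u : List ℕ) (hu : ∀ x ∈ u, 0 < x) : psi (phi u) = u := by
  induction u with
  | nil => rfl
  | cons x r ih =>
    show psi (List.replicate (x-1) false ++ true :: phi r) = x :: r
    rw [psi_rep]
    have hx : 0 < x := hu x (List.mem_cons_self)
    rw [ih (fun y hy => hu y (List.mem_cons_of_mem _ hy))]
    congr 1
    omega

lemma phi_psi_concat (w : List Bool) : phi (psi (w ++ [true])) = w ++ [true] := by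
  induction w with
  | nil => simp [psi, phi]
  | cons b w ih =>
    cases b
    · rw [List.cons_append]
      have hne : psi (w ++ [true]) ≠ [] := psi_ne_nil _ (by simp)
      obtain ⟨x, r, hxr⟩ : ∃ x r, psi (w ++ [true]) = x :: r := by
        cases h : psi (w ++ [true]) with
        | nil => exact absurd h hne
        | cons x r => exact ⟨x, r, rfl⟩
      show phi (match psi (w ++ [true]) with
        | [] => [1]
        | x :: r => (x+1) :: r) = false :: (w ++ [true])
      rw [hxr]
      show List.replicate (x+1-1) false ++ true :: phi r = false :: (w ++ [true])
      have hx : 0 < x := psi_pos _ x (by rw [hxr]; exact List.mem_cons_self)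
      rw [hxr] at ih
      have ihe : List.replicate (x-1) false ++ true :: phi r = w ++ [true] := ih
      rw [← ihe]
      rw [show x+1-1 = (x-1) + 1 from by omega]
      rw [List.replicate_succ, List.cons_append]
    · rw [List.cons_append]
      show phi (1 :: psi (w ++ [true])) = true :: (w ++ [true])
      show List.replicate (1-1) false ++ true :: phi (psi (w ++ [true])) = _
      rw [ih]
      simp

lemma phi_length (u : List ℕ) (hu : ∀ x ∈ u, 0 < x) : (phi u).length = u.sum := by
  induction u with
  | nil => rfl
  | cons x r ih =>
    show (List.replicate (x-1) false ++ true :: phi r).length = x + r.sum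
    simp only [List.length_append, List.length_replicate, List.length_cons]
    rw [ih (fun y hy => hu y (List.mem_cons_of_mem _ hy))]
    have hx : 0 < x := hu x (List.mem_cons_self)
    omega

lemma phi_ends (u : List ℕ) (hne : u ≠ []) :
    ∃ s, phi u = s ++ [true] := by
  induction u with
  | nil => exact absurd rfl hne
  | cons x r ih =>
    cases r with
    | nil =>
      exact ⟨List.replicate (x-1) false, by simp [phi]⟩
    | cons y r' =>
      obtain ⟨s, hs⟩ := ih (by simp)
      exact ⟨List.replicate (x-1) false ++ true :: s, by
        show List.replicate (x-1) false ++ true :: phi (y :: r') = _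
        rw [hs]
        simp⟩

/-- key counting characterization -/
lemma cnt_char (u : List ℕ) (hu : ∀ x ∈ u, 0 < x) :
    ∀ i k, (k+1 ≤ cntb (phi u) i ↔ (k+1 ≤ u.length ∧ (u.take (k+1)).sum ≤ i)) := by
  induction u with
  | nil => intro i k; simp [phi, cntb]
  | cons x r ih =>
    intro i k
    have hx : 0 < x := hu x (List.mem_cons_self)
    have ihr := ih (fun y hy => hu y (List.mem_cons_of_mem _ hy))
    show k+1 ≤ cntb (List.replicate (x-1) false ++ true :: phi r) i ↔ _
    have htake : cntb (List.replicate (x-1) false ++ true :: phi r) i =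
        (if x ≤ i then 1 + cntb (phi r) (i - x) else 0) := by
      unfold cntb
      rw [List.take_append]
      rw [List.count_append]
      rw [List.take_replicate]
      have hrep : (List.replicate (min i (x-1)) false).count true = 0 := by
        simp [List.count_replicate]
      rw [hrep, List.length_replicate]
      by_cases hxi : x ≤ i
      · have : i - (x-1) = (i - x) + 1 := by omega
        rw [this]
        rw [List.take_succ_cons, List.count_cons]
        rw [if_pos hxi]
        simp
        omega
      · have : i - (x-1) = 0 := by omega
        rw [this]
        simp [hxi]
    rw [htake]
    by_cases hxi : x ≤ i
    · rw [if_pos hxi]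
      cases k with
      | zero =>
        simp only [List.length_cons, List.take_succ_cons, List.take_zero, List.sum_cons,
          List.sum_nil]
        constructor
        · intro _; constructor <;> omega
        · intro _; omega
      | succ k =>
        rw [show k+1+1 ≤ 1 + cntb (phi r) (i-x) ↔ k+1 ≤ cntb (phi r) (i-x) from by omega]
        rw [ihr (i-x) k]
        simp only [List.length_cons, List.take_succ_cons, List.sum_cons]
        constructor
        · rintro ⟨h1, h2⟩; constructor <;> omega
        · rintro ⟨h1, h2⟩; constructor <;> omega
    · rw [if_neg hxi]
      cases k with
      | zero =>
        simp only [List.length_cons, List.take_succ_cons, List.take_zero, List.sum_cons,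
          List.sum_nil]
        omega
      | succ k =>
        simp only [List.length_cons, List.take_succ_cons, List.sum_cons]
        constructor
        · intro h; omega
        · rintro ⟨h1, h2⟩; omega

lemma prefix_sum_lt (u : List ℕ) (hu : ∀ x ∈ u, 0 < x) (k : ℕ) (hk : k < u.length) :
    (u.take k).sum < u.sum := by
  have hsplit : (u.take k).sum + (u.drop k).sum = u.sum := by
    rw [← List.sum_append, List.take_append_drop]
  have hne : u.drop k ≠ [] := by
    intro h
    have := List.drop_eq_nil_iff.1 h
    omega
  obtain ⟨y, rest, hy⟩ : ∃ y rest, u.drop k = y :: rest := by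
    cases h : u.drop k with
    | nil => exact absurd h hne
    | cons y rest => exact ⟨y, rest, rfl⟩
  have hypos : 0 < y := hu y (by
    have : y ∈ u.drop k := by rw [hy]; exact List.mem_cons_self
    exact List.mem_of_mem_drop this)
  have : 0 < (u.drop k).sum := by rw [hy]; simp; omega
  omega

lemma comp_ne_nil {n : ℕ} (hn : 1 ≤ n) {u : List ℕ} (hu : IsComposition n u) : u ≠ [] := by
  intro h
  rw [h] at hu
  simp [IsComposition] at hu
  omega

lemma maj_iff {n : ℕ} (hn : 1 ≤ n) {u v : List ℕ}
    (hu : IsComposition n u) (hv : IsComposition n v) :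
    CompMajorizes u v ↔ ∀ i, cntb (phi u) i ≤ cntb (phi v) i := by
  obtain ⟨hupos, husum⟩ := hu
  obtain ⟨hvpos, hvsum⟩ := hv
  constructor
  · intro hmaj i
    rcases Nat.eq_zero_or_pos (cntb (phi u) i) with h0 | hpos
    · omega
    · obtain ⟨j, hj⟩ : ∃ j, cntb (phi u) i = j + 1 := ⟨cntb (phi u) i - 1, by omega⟩
      have h1 := (cnt_char u hupos i j).1 (by omega)
      -- lengths
      have hlen : u.length ≤ v.length := by
        by_contra hlt
        push_neg at hlt
        have hv1 : 1 ≤ v.length := by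
          have := comp_ne_nil hn ⟨hvpos, hvsum⟩
          cases v; · exact absurd rfl this
          · simp
        have := hmaj v.length hv1 (by omega)
        rw [List.take_length] at this
        rw [hvsum] at this
        have hlt2 : (u.take v.length).sum < u.sum := prefix_sum_lt u hupos _ (by omega)
        omega
      have h2 := hmaj (j+1) (by omega) (by omega)
      have h3 : (v.take (j+1)).sum ≤ i := by omega
      have h4 := (cnt_char v hvpos i j).2 ⟨by omega, h3⟩
      omega
  · intro hdom k hk1 hkmin
    obtain ⟨j, rfl⟩ : ∃ j, k = j + 1 := ⟨k - 1, by omega⟩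
    have h1 := (cnt_char u hupos ((u.take (j+1)).sum) j).2 ⟨by omega, le_refl _⟩
    have h2 := hdom ((u.take (j+1)).sum)
    have h3 := (cnt_char v hvpos ((u.take (j+1)).sum) j).1 (by omega)
    exact h3.2

lemma phi_eq_dropLast {n : ℕ} (hn : 1 ≤ n) {u : List ℕ} (hu : IsComposition n u) :
    (phi u).dropLast ++ [true] = phi u ∧ (phi u).dropLast.length = n - 1 := by
  obtain ⟨s, hs⟩ := phi_ends u (comp_ne_nil hn hu)
  have hlen : (phi u).length = n := by rw [phi_length u hu.1, hu.2]
  rw [hs]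
  rw [List.dropLast_concat]
  constructor
  · rfl
  · rw [hs] at hlen
    simp at hlen
    omega

lemma cntb_dropLast {l : List Bool} {m : ℕ} (hl : l.length = m + 1) (i : ℕ) :
    cntb l.dropLast i = cntb l (min i m) := by
  unfold cntb
  rw [List.dropLast_eq_take, List.take_take, hl]
  norm_num

lemma cntb_concat (s : List Bool) (i : ℕ) :
    cntb (s ++ [true]) i = cntb s i + List.count true (List.take (i - s.length) [true]) := by
  unfold cntb
  rw [List.take_append, List.count_append]

/-- Twice the number of ordered pairs `(u, v)` of compositions of `n` with `u` majorizing
`v` equals `(2n choose n)`; equivalently, a uniformly random composition of `n` majorizes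
an independent uniformly random one with probability `(2n choose n) / 2^(2n-1)`. -/
theorem card_majorizing_pairs_of_compositions (n : ℕ) (hn : 1 ≤ n) :
    2 * Nat.card {p : List ℕ × List ℕ //
        IsComposition n p.1 ∧ IsComposition n p.2 ∧ CompMajorizes p.1 p.2} =
      Nat.choose (2 * n) n := by
  have key : Nat.card {p : List ℕ × List ℕ //
      IsComposition n p.1 ∧ IsComposition n p.2 ∧ CompMajorizes p.1 p.2} = gcnt (n-1) 0 := by
    rw [← DP_card (n-1) 0, ← Nat.card_eq_finsetCard]
    apply Nat.card_congr
    refine ⟨fun p => ⟨((phi p.1.1).dropLast, (phi p.1.2).dropLast), ?_⟩,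
      fun q => ⟨(psi (q.1.1 ++ [true]), psi (q.1.2 ++ [true])), ?_⟩, ?_, ?_⟩
    · -- membership in DP
      obtain ⟨⟨u, v⟩, hu, hv, hmaj⟩ := p
      rw [mem_DP]
      refine ⟨(phi_eq_dropLast hn hu).2, (phi_eq_dropLast hn hv).2, fun i => ?_⟩
      have hlu : (phi u).length = n := by rw [phi_length u hu.1, hu.2]
      have hlv : (phi v).length = n := by rw [phi_length v hv.1, hv.2]
      replace hu : IsComposition n u := hu
      replace hv : IsComposition n v := hv
      replace hmaj : CompMajorizes u v := hmaj
      have hdom := (maj_iff hn hu hv).1 hmaj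
      show cntb (phi u).dropLast i ≤ cntb (phi v).dropLast i + 0
      rw [cntb_dropLast (m := n - 1) (by omega) i, cntb_dropLast (m := n - 1) (by omega) i]
      have := hdom (min i (n-1))
      omega
    · -- compositions and majorization
      obtain ⟨⟨s, t⟩, hq⟩ := q
      rw [mem_DP] at hq
      obtain ⟨hls, hlt, hdom⟩ := hq
      dsimp only at hls hlt hdom ⊢
      have hsu : IsComposition n (psi (s ++ [true])) := by
        refine ⟨psi_pos _, ?_⟩
        rw [psi_sum]
        simp [hls]
        omega
      have hsv : IsComposition n (psi (t ++ [true])) := by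
        refine ⟨psi_pos _, ?_⟩
        rw [psi_sum]
        simp [hlt]
        omega
      refine ⟨hsu, hsv, (maj_iff hn hsu hsv).2 fun i => ?_⟩
      rw [phi_psi_concat, phi_psi_concat]
      rw [cntb_concat, cntb_concat, hls, hlt]
      have := hdom i
      omega
    · -- left inverse
      rintro ⟨⟨u, v⟩, hu, hv, hmaj⟩
      apply Subtype.ext
      simp only [Prod.mk.injEq]
      constructor
      · rw [(phi_eq_dropLast hn hu).1, psi_phi u hu.1]
      · rw [(phi_eq_dropLast hn hv).1, psi_phi v hv.1]
    · -- right inverse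
      rintro ⟨⟨s, t⟩, hq⟩
      apply Subtype.ext
      simp only [Prod.mk.injEq]
      constructor
      · rw [phi_psi_concat, List.dropLast_concat]
      · rw [phi_psi_concat, List.dropLast_concat]
  rw [key]
  exact final_arith n hn
end

section
/- Let m ≥ 1 and let z_1,…,z_m be real numbers with ∑_{i=1}^m z_i = 0, such that no proper nonempty cyclic substring sums to zero: for every starting index k and every length l with 1 ≤ l < m, ∑_{i=0}^{l−1} z_{((k+i−1) mod m)+1} ≠ 0. Then there is exactly one index k ∈ {1,…,m} such that the rotation (z_k, z_{k+1}, …, z_m, z_1, …, z_{k−1}) has all of its partial sums non-negative. -/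
open Finset

/-- **Spitzer's lemma.** Let `z 0, …, z (m-1)` be reals summing to `0` such that no proper
nonempty cyclic substring sums to zero.  Then there is exactly one starting index
`k ∈ {0, …, m-1}` whose rotation `(z k, z (k+1), …)` (indices mod `m`) has all of its
partial sums non-negative. -/
theorem spitzer_unique_rotation (m : ℕ) (hm : 1 ≤ m) (z : ℕ → ℝ)
    (hsum : ∑ i ∈ Finset.range m, z i = 0)
    (hgen : ∀ k < m, ∀ l : ℕ, 1 ≤ l → l < m →
      (∑ i ∈ Finset.range l, z ((k + i) % m)) ≠ 0) :
    ∃! k : ℕ, k < m ∧ ∀ l : ℕ, 1 ≤ l → l ≤ m →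
      0 ≤ ∑ i ∈ Finset.range l, z ((k + i) % m) := by
  set S : ℕ → ℝ := fun j => ∑ i ∈ Finset.range j, z (i % m) with hS
  have hsub : ∀ k l : ℕ, (∑ i ∈ Finset.range l, z ((k + i) % m)) = S (k + l) - S k := by
    intro k l
    have := Finset.sum_range_add (fun i => z (i % m)) k l
    simp only [hS, this]
    ring
  have hSm : S m = 0 := by
    rw [hS]
    rw [← hsum]
    exact Finset.sum_congr rfl (fun i hi => by
      rw [Nat.mod_eq_of_lt (Finset.mem_range.mp hi)])
  have hper : ∀ j, S (j + m) = S j := by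
    intro j
    induction j with
    | zero => simpa [hS] using hSm
    | succ n ih =>
      have h1 : S (n + 1 + m) = S (n + m) + z ((n + m) % m) := by
        have : n + 1 + m = (n + m) + 1 := by ring
        rw [this]; simp only [hS]; rw [Finset.sum_range_succ]
      have h2 : S (n + 1) = S n + z (n % m) := by
        simp only [hS]; rw [Finset.sum_range_succ]
      rw [h1, h2, ih, Nat.add_mod_right]
  have hperT : ∀ j t, S (j + t * m) = S j := by
    intro j t
    induction t with
    | zero => simp
    | succ n ih =>
      have : j + (n + 1) * m = (j + n * m) + m := by ring
      rw [this, hper, ih]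
  have hmodS : ∀ j, S j = S (j % m) := by
    intro j
    conv_lhs => rw [← Nat.mod_add_div' j m]
    exact hperT _ _
  -- injectivity of S below m
  have hgen' : ∀ k < m, ∀ l : ℕ, 1 ≤ l → l < m → S (k + l) ≠ S k := by
    intro k hk l hl1 hl2 h
    exact hgen k hk l hl1 hl2 (by rw [hsub, h, sub_self])
  -- minimizer
  obtain ⟨k0, hk0mem, hk0min⟩ :=
    Finset.exists_min_image (Finset.range m) S ⟨0, Finset.mem_range.mpr hm⟩
  have hk0 : k0 < m := Finset.mem_range.mp hk0mem
  have hmin : ∀ j < m, S k0 ≤ S j := fun j hj => hk0min j (Finset.mem_range.mpr hj)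
  refine ⟨k0, ⟨hk0, ?_⟩, ?_⟩
  · intro l hl1 hl2
    rw [hsub]
    have : S (k0 + l) = S ((k0 + l) % m) := hmodS _
    rw [this]
    have := hmin ((k0 + l) % m) (Nat.mod_lt _ hm)
    linarith
  · rintro k' ⟨hk', hpos⟩
    by_contra hne
    have hne' : k' ≠ k0 := hne
    -- choose l with k' + l ≡ k0, 1 ≤ l < m
    set l : ℕ := if k' < k0 then k0 - k' else k0 + m - k' with hl
    have hl1 : 1 ≤ l := by
      rw [hl]; split <;> omega
    have hl2 : l < m := by
      rw [hl]; split <;> omega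
    have hSkl : S (k' + l) = S k0 := by
      rw [hl]
      split
      · congr 1; omega
      · have : k' + (k0 + m - k') = k0 + m := by omega
        rw [this, hper]
    have h1 : 0 ≤ S k0 - S k' := by
      have := hpos l hl1 (le_of_lt hl2)
      rw [hsub, hSkl] at this
      exact this
    have h2 : S k0 ≠ S k' := by
      have := hgen' k' hk' l hl1 hl2
      rw [hSkl] at this
      exact this
    have := hmin k' hk'
    have : S k' < S k0 := lt_of_le_of_ne (by linarith) (fun h => h2 h.symm)
    linarith
end

section
/- For every m ≥ 0, the number of ordered pairs (x, y) with x, y ∈ {0,1}^m such that ∑_{i=1}^k x_i ≥ ∑_{i=1}^k y_i for every k with 1 ≤ k ≤ m equals (2m+1 choose m). (In race form: if two racers each, at every one of m steps, stay in place or advance by 1 with equal probability 1/2 independently, then the probability that the first racer is never behind the second is (2m+1 choose m)/4^m.) -/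
open Finset

namespace LazyRace

/-- partial sum of first `k` entries -/
def S {m : ℕ} (x : Fin m → Fin 2) (k : ℕ) : ℕ :=
  ∑ i : Fin m, if (i : ℕ) < k then (x i : ℕ) else 0

lemma S_of_le {m : ℕ} (x : Fin m → Fin 2) {k : ℕ} (h : m ≤ k) : S x k = S x m := by
  unfold S
  refine Finset.sum_congr rfl fun i _ => ?_
  have : (i : ℕ) < m := i.isLt
  rw [if_pos (lt_of_lt_of_le this h), if_pos this]

lemma S_le {m : ℕ} (x : Fin m → Fin 2) (k : ℕ) : S x k ≤ m := by
  unfold S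
  calc ∑ i : Fin m, (if (i : ℕ) < k then (x i : ℕ) else 0)
      ≤ ∑ _i : Fin m, 1 := by
        refine Finset.sum_le_sum fun i _ => ?_
        split
        · exact Fin.is_le _
        · exact Nat.zero_le _
    _ = m := by simp

lemma S_snoc {m : ℕ} (x : Fin m → Fin 2) (a : Fin 2) (k : ℕ) :
    S (Fin.snoc x a) k = S x k + if m < k then (a : ℕ) else 0 := by
  unfold S
  rw [Fin.sum_univ_castSucc]
  simp [Fin.snoc_castSucc, Fin.snoc_last]

/-- "never behind" predicate -/
def Good {m : ℕ} (p : (Fin m → Fin 2) × (Fin m → Fin 2)) : Prop :=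
  ∀ k ≤ m, S p.2 k ≤ S p.1 k

lemma good_snoc {m : ℕ} (x y : Fin m → Fin 2) (a b : Fin 2) :
    Good (Fin.snoc x a, Fin.snoc y b) ↔
      Good (x, y) ∧ S y m + (b : ℕ) ≤ S x m + (a : ℕ) := by
  constructor
  · intro h
    refine ⟨fun k hk => ?_, ?_⟩
    · have := h k (le_trans hk (Nat.le_succ m))
      simpa [S_snoc, Nat.not_lt.mpr hk] using this
    · have := h (m + 1) le_rfl
      simpa [S_snoc, S_of_le x (Nat.le_succ m), S_of_le y (Nat.le_succ m)] using this
  · rintro ⟨h1, h2⟩ k hk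
    rcases Nat.lt_or_ge k (m + 1) with hk' | hk'
    · have := h1 k (Nat.lt_succ_iff.mp hk')
      simpa [S_snoc, Nat.not_lt.mpr (Nat.lt_succ_iff.mp hk')] using this
    · have hm : m < k := hk'
      simp only [S_snoc, if_pos hm]
      calc S y k + (b : ℕ) = S y m + (b : ℕ) := by rw [S_of_le y (le_of_lt hm)]
        _ ≤ S x m + (a : ℕ) := h2
        _ = S x k + (a : ℕ) := by rw [S_of_le x (le_of_lt hm)]

/-- number of good pairs with final lead `j` -/
noncomputable def N (m j : ℕ) : ℕ :=
  Nat.card {p : (Fin m → Fin 2) × (Fin m → Fin 2) //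
    Good p ∧ S p.1 m = S p.2 m + j}

/-- predicate for last-step refinement -/
def R (m j : ℕ) (ab : Fin 2 × Fin 2) (q : (Fin m → Fin 2) × (Fin m → Fin 2)) : Prop :=
  Good q ∧ S q.2 m + (ab.2 : ℕ) ≤ S q.1 m + (ab.1 : ℕ) ∧
    S q.1 m + (ab.1 : ℕ) = S q.2 m + (ab.2 : ℕ) + j

/-- the snoc equivalence on pairs -/
def F (m : ℕ) :
    ((Fin (m + 1) → Fin 2) × (Fin (m + 1) → Fin 2)) ≃
      ((Fin 2 × Fin 2) × ((Fin m → Fin 2) × (Fin m → Fin 2))) where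
  toFun p := ((p.1 (Fin.last m), p.2 (Fin.last m)), (Fin.init p.1, Fin.init p.2))
  invFun q := (Fin.snoc q.2.1 q.1.1, Fin.snoc q.2.2 q.1.2)
  left_inv p := by simp [Fin.snoc_init_self]
  right_inv q := by simp [Fin.init_snoc, Fin.snoc_last]

lemma key_snoc (m j : ℕ) (x y : Fin m → Fin 2) (a b : Fin 2) :
    (Good (Fin.snoc x a, Fin.snoc y b) ∧
        S (Fin.snoc x a : Fin (m+1) → Fin 2) (m+1)
          = S (Fin.snoc y b : Fin (m+1) → Fin 2) (m+1) + j) ↔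
      R m j (a, b) (x, y) := by
  rw [good_snoc]
  unfold R
  simp only [S_snoc, if_pos (Nat.lt_succ_self m), S_of_le x (Nat.le_succ m),
    S_of_le y (Nat.le_succ m)]
  tauto

lemma N_succ_eq (m j : ℕ) :
    N (m + 1) j = ∑ ab : Fin 2 × Fin 2, Nat.card {q : (Fin m → Fin 2) × (Fin m → Fin 2) //
      R m j ab q} := by
  classical
  unfold N
  have key : ∀ p : (Fin (m+1) → Fin 2) × (Fin (m+1) → Fin 2),
      (Good p ∧ S p.1 (m+1) = S p.2 (m+1) + j) ↔ R m j (F m p).1 (F m p).2 := by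
    rintro ⟨x, y⟩
    have := key_snoc m j (Fin.init x) (Fin.init y) (x (Fin.last m)) (y (Fin.last m))
    simpa [Fin.snoc_init_self, F] using this
  rw [Nat.card_congr (Equiv.subtypeEquiv (q := fun z => R m j z.1 z.2) (F m) key)]
  rw [Nat.card_congr (Equiv.subtypeProdEquivSigmaSubtype (R m j))]
  rw [Nat.card_eq_fintype_card, Fintype.card_sigma]
  refine Finset.sum_congr rfl fun ab _ => ?_
  rw [Nat.card_eq_fintype_card]


lemma card_R (m j : ℕ) (a b : Fin 2) (j' : ℕ)
    (h : ∀ q : (Fin m → Fin 2) × (Fin m → Fin 2),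
      R m j (a, b) q ↔ (Good q ∧ S q.1 m = S q.2 m + j')) :
    Nat.card {q : (Fin m → Fin 2) × (Fin m → Fin 2) // R m j (a, b) q} = N m j' :=
  Nat.card_congr (Equiv.subtypeEquivRight h)

lemma good_le {m : ℕ} {q : (Fin m → Fin 2) × (Fin m → Fin 2)} (h : Good q) :
    S q.2 m ≤ S q.1 m := h m le_rfl

lemma N_rec_succ (m j : ℕ) :
    N (m + 1) (j + 1) = N m j + 2 * N m (j + 1) + N m (j + 2) := by
  rw [N_succ_eq, Fintype.sum_prod_type, Fin.sum_univ_two, Fin.sum_univ_two, Fin.sum_univ_two]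
  rw [card_R m (j+1) 0 0 (j+1) (fun q => by
    unfold R
    have := good_le (q := q)
    constructor
    · rintro ⟨hg, h1, h2⟩
      exact ⟨hg, by simp at h2 ⊢; omega⟩
    · rintro ⟨hg, h1⟩
      have := this hg
      refine ⟨hg, by simp; omega, by simp; omega⟩)]
  rw [card_R m (j+1) 0 1 (j+2) (fun q => by
    unfold R
    constructor
    · rintro ⟨hg, h1, h2⟩
      exact ⟨hg, by simp at h2 ⊢; omega⟩
    · rintro ⟨hg, h1⟩
      refine ⟨hg, by simp; omega, by simp; omega⟩)]
  rw [card_R m (j+1) 1 0 j (fun q => by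
    unfold R
    constructor
    · rintro ⟨hg, h1, h2⟩
      exact ⟨hg, by simp at h2 ⊢; omega⟩
    · rintro ⟨hg, h1⟩
      refine ⟨hg, by simp; omega, by simp; omega⟩)]
  rw [card_R m (j+1) 1 1 (j+1) (fun q => by
    unfold R
    have := good_le (q := q)
    constructor
    · rintro ⟨hg, h1, h2⟩
      exact ⟨hg, by simp at h2 ⊢; omega⟩
    · rintro ⟨hg, h1⟩
      have := this hg
      refine ⟨hg, by simp; omega, by simp; omega⟩)]
  ring

lemma N_rec_zero (m : ℕ) : N (m + 1) 0 = 2 * N m 0 + N m 1 := by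
  rw [N_succ_eq, Fintype.sum_prod_type, Fin.sum_univ_two, Fin.sum_univ_two, Fin.sum_univ_two]
  have h10 : Nat.card {q : (Fin m → Fin 2) × (Fin m → Fin 2) // R m 0 (1, 0) q} = 0 := by
    have : IsEmpty {q : (Fin m → Fin 2) × (Fin m → Fin 2) // R m 0 (1, 0) q} := by
      refine ⟨fun x => ?_⟩
      obtain ⟨q, hg, h1, h2⟩ := x
      have := good_le hg
      simp at h2
      omega
    simp [Nat.card_of_isEmpty]
  rw [h10]
  rw [card_R m 0 0 0 0 (fun q => by
    unfold R
    have := good_le (q := q)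
    constructor
    · rintro ⟨hg, h1, h2⟩
      exact ⟨hg, by simp at h2 ⊢; omega⟩
    · rintro ⟨hg, h1⟩
      have := this hg
      refine ⟨hg, by simp; omega, by simp; omega⟩)]
  rw [card_R m 0 0 1 1 (fun q => by
    unfold R
    constructor
    · rintro ⟨hg, h1, h2⟩
      exact ⟨hg, by simp at h2 ⊢; omega⟩
    · rintro ⟨hg, h1⟩
      refine ⟨hg, by simp; omega, by simp; omega⟩)]
  rw [card_R m 0 1 1 0 (fun q => by
    unfold R
    have := good_le (q := q)
    constructor
    · rintro ⟨hg, h1, h2⟩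
      exact ⟨hg, by simp at h2 ⊢; omega⟩
    · rintro ⟨hg, h1⟩
      have := this hg
      refine ⟨hg, by simp; omega, by simp; omega⟩)]
  ring

/-- ballot-style closed form -/
def B (m j : ℕ) : ℤ :=
  ((2 * m + 1).choose (m + 1 + j) : ℤ) - ((2 * m + 1).choose (m + 2 + j) : ℤ)

lemma pascal2 (n k : ℕ) :
    (n + 2).choose (k + 2) = n.choose k + 2 * n.choose (k + 1) + n.choose (k + 2) := by
  rw [Nat.choose_succ_succ (n + 1) (k + 1), Nat.choose_succ_succ n k,
    Nat.choose_succ_succ n (k + 1)]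
  ring

lemma choose_symm_mid (m : ℕ) : (2 * m + 1).choose m = (2 * m + 1).choose (m + 1) := by
  have := Nat.choose_symm (n := 2 * m + 1) (k := m + 1) (by omega)
  simpa [show 2 * m + 1 - (m + 1) = m by omega] using this

lemma B_rec_succ (m j : ℕ) :
    B (m + 1) (j + 1) = B m j + 2 * B m (j + 1) + B m (j + 2) := by
  unfold B
  simp only [show 2 * (m + 1) + 1 = 2 * m + 1 + 2 from by ring,
    show m + 1 + 1 + (j + 1) = m + 1 + j + 2 from by ring,
    show m + 1 + 2 + (j + 1) = m + 1 + j + 3 from by ring,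
    show m + 1 + (j + 1) = m + 1 + j + 1 from by ring,
    show m + 1 + (j + 2) = m + 1 + j + 2 from by ring,
    show m + 2 + (j + 2) = m + 1 + j + 3 from by ring,
    show m + 2 + (j + 1) = m + 1 + j + 2 from by ring,
    show m + 2 + j = m + 1 + j + 1 from by ring]
  have k1 := pascal2 (2 * m + 1) (m + 1 + j)
  have k2 := pascal2 (2 * m + 1) (m + 1 + j + 1)
  simp only [show m + 1 + j + 1 + 1 = m + 1 + j + 2 from by ring,
    show m + 1 + j + 1 + 2 = m + 1 + j + 3 from by ring] at k2
  rw [k1, k2]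
  push_cast
  ring

lemma B_rec_zero (m : ℕ) : B (m + 1) 0 = 2 * B m 0 + B m 1 := by
  unfold B
  simp only [show 2 * (m + 1) + 1 = 2 * m + 1 + 2 from by ring,
    show m + 1 + 1 + 0 = m + 2 from by ring,
    show m + 1 + 2 + 0 = m + 3 from by ring,
    show m + 1 + 0 = m + 1 from by ring,
    show m + 2 + 0 = m + 2 from by ring,
    show m + 1 + 1 = m + 2 from by ring,
    show m + 2 + 1 = m + 3 from by ring]
  have k1 := pascal2 (2 * m + 1) m
  have k2 := pascal2 (2 * m + 1) (m + 1)
  simp only [show m + 1 + 1 = m + 2 from by ring,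
    show m + 1 + 2 = m + 3 from by ring] at k1 k2
  rw [k1, k2, choose_symm_mid m]
  push_cast
  ring

lemma N_eq_B (m : ℕ) : ∀ j, (N m j : ℤ) = B m j := by
  induction m with
  | zero =>
    intro j
    unfold N B
    match j with
    | 0 =>
      have h : ∀ p : (Fin 0 → Fin 2) × (Fin 0 → Fin 2),
          Good p ∧ S p.1 0 = S p.2 0 + 0 := by
        intro p
        refine ⟨fun k _ => le_rfl, by simp [S]⟩
      rw [Nat.card_congr (Equiv.subtypeUnivEquiv h)]
      rw [Nat.card_eq_fintype_card]
      simp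
    | (j' + 1) =>
      have : IsEmpty {p : (Fin 0 → Fin 2) × (Fin 0 → Fin 2) //
          Good p ∧ S p.1 0 = S p.2 0 + (j' + 1)} := by
        refine ⟨fun x => ?_⟩
        obtain ⟨p, hg, h⟩ := x
        simp [S] at h
      rw [Nat.card_of_isEmpty]
      rw [Nat.choose_eq_zero_of_lt (by omega), Nat.choose_eq_zero_of_lt (by omega)]
      simp
  | succ m ih =>
    intro j
    match j with
    | 0 =>
      rw [N_rec_zero]
      push_cast
      rw [ih 0, ih 1, B_rec_zero]
    | (j' + 1) =>
      rw [N_rec_succ]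
      push_cast
      rw [ih j', ih (j' + 1), ih (j' + 2), B_rec_succ]

lemma telescope (f : ℕ → ℤ) (n : ℕ) :
    ∑ j ∈ Finset.range n, (f j - f (j + 1)) = f 0 - f n := by
  induction n with
  | zero => simp
  | succ n ih => rw [Finset.sum_range_succ, ih]; ring

lemma sum_B (m : ℕ) :
    ∑ j ∈ Finset.range (m + 1), B m j = ((2 * m + 1).choose m : ℤ) := by
  have h : ∀ j ∈ Finset.range (m + 1), B m j =
      (fun j => ((2 * m + 1).choose (m + 1 + j) : ℤ)) j
        - (fun j => ((2 * m + 1).choose (m + 1 + j) : ℤ)) (j + 1) := by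
    intro j _
    unfold B
    simp only [show m + 1 + (j + 1) = m + 2 + j from by ring]
  rw [Finset.sum_congr rfl h, telescope]
  rw [Nat.choose_eq_zero_of_lt (by omega : 2 * m + 1 < m + 1 + (m + 1))]
  rw [← choose_symm_mid m]
  simp [show m + 1 + 0 = m + 1 from rfl]

lemma card_good (m : ℕ) :
    Nat.card {p : (Fin m → Fin 2) × (Fin m → Fin 2) // Good p}
      = ∑ j ∈ Finset.range (m + 1), N m j := by
  classical
  set f : {p : (Fin m → Fin 2) × (Fin m → Fin 2) // Good p} → Fin (m + 1) :=
    fun q => ⟨S q.1.1 m - S q.1.2 m, by have := S_le q.1.1 m; omega⟩ with hf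
  rw [Nat.card_congr (Equiv.sigmaFiberEquiv f).symm]
  rw [Nat.card_eq_fintype_card, Fintype.card_sigma]
  rw [← Fin.sum_univ_eq_sum_range (fun j => N m j) (m + 1)]
  refine Finset.sum_congr rfl fun j _ => ?_
  rw [← Nat.card_eq_fintype_card]
  have e1 : {x : {p : (Fin m → Fin 2) × (Fin m → Fin 2) // Good p} // f x = j} ≃
      {x : {p : (Fin m → Fin 2) × (Fin m → Fin 2) // Good p} //
        S x.1.1 m - S x.1.2 m = (j : ℕ)} := by
    refine Equiv.subtypeEquivRight fun x => ?_
    rw [hf]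
    constructor
    · intro h
      simpa using congrArg Fin.val h
    · intro h
      exact Fin.ext (by simpa using h)
  rw [Nat.card_congr e1]
  have e2 : {x : {p : (Fin m → Fin 2) × (Fin m → Fin 2) // Good p} //
        S x.1.1 m - S x.1.2 m = (j : ℕ)} ≃
      {p : (Fin m → Fin 2) × (Fin m → Fin 2) //
        Good p ∧ S p.1 m - S p.2 m = (j : ℕ)} :=
    Equiv.subtypeSubtypeEquivSubtypeInter Good (fun p => S p.1 m - S p.2 m = (j : ℕ))
  rw [Nat.card_congr e2]
  unfold N
  refine Nat.card_congr (Equiv.subtypeEquivRight fun q => ?_)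
  have hle := good_le (q := q)
  constructor
  · rintro ⟨hg, h⟩
    exact ⟨hg, by have := hle hg; omega⟩
  · rintro ⟨hg, h⟩
    exact ⟨hg, by omega⟩

lemma S_cast {m : ℕ} (x : Fin m → Fin 2) (k : ℕ) :
    ((S x k : ℕ) : ℤ) = ∑ i ∈ univ.filter (fun i : Fin m => (i : ℕ) < k), ((x i : ℕ) : ℤ) := by
  unfold S
  rw [Finset.sum_filter]
  push_cast
  rfl

end LazyRace

/-- The number of pairs of `{0,1}`-sequences `(x, y)` of length `m` such that every
partial sum of `x` is at least the corresponding partial sum of `y` is `(2m+1 choose m)`.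
(In race form: the probability that a racer making `m` lazy unit steps is never behind an
independent identical racer is `(2m+1 choose m) / 4^m`.) -/
theorem card_never_behind_lazy_pairs (m : ℕ) :
    Nat.card {p : (Fin m → Fin 2) × (Fin m → Fin 2) //
        ∀ k : ℕ, 1 ≤ k → k ≤ m →
          (∑ i ∈ univ.filter (fun i : Fin m => (i : ℕ) < k), ((p.2 i : ℕ) : ℤ)) ≤
            ∑ i ∈ univ.filter (fun i : Fin m => (i : ℕ) < k), ((p.1 i : ℕ) : ℤ)} =
      Nat.choose (2 * m + 1) m := by
  have hiff : ∀ p : (Fin m → Fin 2) × (Fin m → Fin 2),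
      (∀ k : ℕ, 1 ≤ k → k ≤ m →
          (∑ i ∈ univ.filter (fun i : Fin m => (i : ℕ) < k), ((p.2 i : ℕ) : ℤ)) ≤
            ∑ i ∈ univ.filter (fun i : Fin m => (i : ℕ) < k), ((p.1 i : ℕ) : ℤ)) ↔
        LazyRace.Good p := by
    intro p
    constructor
    · intro h k hk
      rcases Nat.eq_zero_or_pos k with rfl | hk1
      · simp [LazyRace.S]
      · have := h k hk1 hk
        rw [← LazyRace.S_cast, ← LazyRace.S_cast] at this
        exact_mod_cast this
    · intro h k hk1 hk
      rw [← LazyRace.S_cast, ← LazyRace.S_cast]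
      exact_mod_cast h k hk
  rw [Nat.card_congr (Equiv.subtypeEquivRight hiff), LazyRace.card_good]
  have key : ((∑ j ∈ Finset.range (m + 1), LazyRace.N m j : ℕ) : ℤ)
      = ((2 * m + 1).choose m : ℤ) := by
    push_cast
    rw [Finset.sum_congr rfl (fun j _ => LazyRace.N_eq_B m j), LazyRace.sum_B]
  exact_mod_cast key
end
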